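/- arXiv:1402.2102 — 3 statements merged into one kernel-verified Lean document; each statement's English description precedes it below -/
import Mathlib

section
/- Let R(x,x') be a balanced difference bounds constraint over N variables, let n ≥ 1, and let θ be a short corner in G_R^n (a corner of extent at most N²) of the form x_i^(k) →…→ x_j^(k). If θ is a right corner, then every valuation ν : x → ℤ satisfying S_fw (i.e., such that there exists ν' with (ν,ν') ∈ R^{N²}) satisfies ν(x_i) − ν(x_j) ≤ w(θ); if θ is a left corner, then every valuation ν' satisfying S_bw (i.e., such that there exists ν with (ν,ν') ∈ R^{N²}) satisfies ν'(x_i) − ν'(x_j) ≤ w(θ). Consequently, every pair of valuations in the relation R_s := R ∧ S_fw(x) ∧ S_bw(x') satisfies the corresponding bound. -/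
/- ## Difference bounds constraints and their relations -/

/-- Valuations of `N` integer variables. -/
abbrev Val (N : ℕ) := Fin N → ℤ

/-- An atomic proposition `u - v ≤ c` where `u, v` range over the unprimed
(`Sum.inl`) and primed (`Sum.inr`) variables. -/
abbrev Atom (N : ℕ) := (Fin N ⊕ Fin N) × (Fin N ⊕ Fin N) × ℤ

/-- A vertex of an unfolded constraint graph: a position together with a variable. -/
abbrev Vtx (N : ℕ) := ℤ × Fin N

/-- A difference bounds constraint: a finite conjunction of atomic propositions. -/
structure DBC (N : ℕ) where
  atoms : Finset (Atom N)

/-- A path in an unfolded constraint graph: a first vertex followed by a list of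
steps, each carrying a weight and a target vertex. -/
structure UPath (N : ℕ) where
  first : Vtx N
  steps : List (ℤ × Vtx N)

variable {N : ℕ}

def interp (ν ν' : Val N) : Fin N ⊕ Fin N → ℤ
  | Sum.inl i => ν i
  | Sum.inr i => ν' i

/-- The relation on valuations defined by a difference bounds constraint. -/
def DBC.rel (R : DBC N) (ν ν' : Val N) : Prop :=
  ∀ a ∈ R.atoms, interp ν ν' a.1 - interp ν ν' a.2.1 ≤ a.2.2

/-- Relational composition. -/
def relComp (P Q : Val N → Val N → Prop) (ν ν' : Val N) : Prop :=
  ∃ μ, P ν μ ∧ Q μ ν'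

/-- `n`-fold relational composition, with `relPow P 0` the identity relation. -/
def relPow (P : Val N → Val N → Prop) : ℕ → Val N → Val N → Prop
  | 0 => Eq
  | n + 1 => relComp P (relPow P n)

/-- A DB constraint is balanced when `x i - x j ≤ c` is a conjunct iff
`x' i - x' j ≤ c` is a conjunct. -/
def DBC.Balanced (R : DBC N) : Prop :=
  ∀ (i j : Fin N) (c : ℤ),
    (Sum.inl i, Sum.inl j, c) ∈ R.atoms ↔ (Sum.inr i, Sum.inr j, c) ∈ R.atoms

/-- Forward one-directional: every atom is of the form `x i - x' j ≤ c`. -/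
def DBC.IsFw (R : DBC N) : Prop :=
  ∀ a ∈ R.atoms, ∃ (i j : Fin N) (c : ℤ), a = (Sum.inl i, Sum.inr j, c)

/-- Backward one-directional: every atom is of the form `x' i - x j ≤ c`. -/
def DBC.IsBw (R : DBC N) : Prop :=
  ∀ a ∈ R.atoms, ∃ (i j : Fin N) (c : ℤ), a = (Sum.inr i, Sum.inl j, c)

def DBC.IsOneDirectional (R : DBC N) : Prop := R.IsFw ∨ R.IsBw

/- ## Unfolded constraint graphs -/

/-- The endpoint of an atom placed at copy `p` of the unfolding: unprimed
variables live at position `p`, primed ones at position `p + 1`. -/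
def endpt (p : ℤ) : Fin N ⊕ Fin N → Vtx N
  | Sum.inl i => (p, i)
  | Sum.inr i => (p + 1, i)

/-- Edge of the unfolding contributed by copy `p` of the constraint graph. -/
def DBC.EdgeAt (R : DBC N) (p : ℤ) (u v : Vtx N) (c : ℤ) : Prop :=
  ∃ s t, (s, t, c) ∈ R.atoms ∧ u = endpt p s ∧ v = endpt p t

/-- Edge of the bi-infinite unfolding. -/
def DBC.Edge (R : DBC N) (u v : Vtx N) (c : ℤ) : Prop :=
  ∃ p : ℤ, R.EdgeAt p u v c

/-- Edge of the `n`-times unfolding `G_R^n` (copies `0, …, n-1`). -/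
def DBC.EdgeN (R : DBC N) (n : ℕ) (u v : Vtx N) (c : ℤ) : Prop :=
  ∃ p : ℤ, 0 ≤ p ∧ p < (n : ℤ) ∧ R.EdgeAt p u v c

namespace UPath

/-- The list of vertices traversed by a path. -/
def vertices (ρ : UPath N) : List (Vtx N) := ρ.first :: ρ.steps.map Prod.snd

/-- The last vertex of a path. -/
def last (ρ : UPath N) : Vtx N := (ρ.steps.map Prod.snd).getLastD ρ.first

/-- The weight of a path: the sum of its edge weights. -/
def weight (ρ : UPath N) : ℤ := (ρ.steps.map Prod.fst).sum

def posList (ρ : UPath N) : List ℤ := ρ.vertices.map Prod.fst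

/-- The set of positions of the vertices of a path. -/
def posFinset (ρ : UPath N) : Finset ℤ := ρ.posList.toFinset

theorem posFinset_nonempty (ρ : UPath N) : ρ.posFinset.Nonempty := by
  refine ⟨ρ.first.1, ?_⟩
  simp [posFinset, posList, vertices]

/-- The extent of a path: the difference between its maximal and minimal
position. -/
def extent (ρ : UPath N) : ℤ :=
  ρ.posFinset.max' ρ.posFinset_nonempty - ρ.posFinset.min' ρ.posFinset_nonempty

/-- The list of variables traversed by a path. -/
def varList (ρ : UPath N) : List (Fin N) := ρ.vertices.map Prod.snd

/-- The steps form a chain of edges w.r.t. the edge relation `E`. -/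
def EdgeChain (E : Vtx N → Vtx N → ℤ → Prop) : Vtx N → List (ℤ × Vtx N) → Prop
  | _, [] => True
  | u, s :: rest => E u s.2 s.1 ∧ EdgeChain E s.2 rest

/-- The path lies in the bi-infinite unfolding of the constraint graph of `R`. -/
def InUnf (R : DBC N) (ρ : UPath N) : Prop := EdgeChain R.Edge ρ.first ρ.steps

/-- The path lies in the `n`-times unfolding `G_R^n`. -/
def InUnfN (R : DBC N) (n : ℕ) (ρ : UPath N) : Prop :=
  EdgeChain (R.EdgeN n) ρ.first ρ.steps

/-- Concatenation (the caller must ensure `π.first = ρ.last` for this to be a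
genuine path concatenation). -/
def append (ρ π : UPath N) : UPath N := ⟨ρ.first, ρ.steps ++ π.steps⟩

/-- Shift a path by `k` positions. -/
def shift (k : ℤ) (ρ : UPath N) : UPath N :=
  ⟨(ρ.first.1 + k, ρ.first.2), ρ.steps.map fun s => (s.1, (s.2.1 + k, s.2.2))⟩

/-- Concatenation with implicit shifting: `π` is shifted so that its first
vertex is at the position of the last vertex of `ρ`. -/
def glue (ρ π : UPath N) : UPath N := ρ.append (shift (ρ.last.1 - π.first.1) π)

/-- `k`-fold concatenation of a (repeating) path with itself, each copy shifted
so that its first vertex coincides with the last vertex of the previous copy. -/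
def pow (μ : UPath N) : ℕ → UPath N
  | 0 => ⟨μ.first, []⟩
  | k + 1 => (pow μ k).glue μ

def IsVertical (ρ : UPath N) : Prop := ρ.last.1 = ρ.first.1

def IsForward (ρ : UPath N) : Prop := ρ.first.1 < ρ.last.1

def IsBackward (ρ : UPath N) : Prop := ρ.last.1 < ρ.first.1

/-- A path is repeating if its endpoints are copies of the same variable at
different positions. -/
def IsRepeating (ρ : UPath N) : Prop := ρ.first.1 ≠ ρ.last.1 ∧ ρ.first.2 = ρ.last.2

/-- Relative length: the absolute difference of the first and last positions. -/
def relLen (ρ : UPath N) : ℤ := |ρ.last.1 - ρ.first.1|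

/-- Right corner of some extent `d`: a nonempty vertical path whose positions
are exactly `{k, …, k+d}` where `k` is its first (= last) position. -/
def IsRightCorner (ρ : UPath N) : Prop :=
  ρ.steps ≠ [] ∧ ρ.last.1 = ρ.first.1 ∧
  ∃ d : ℕ, ρ.posFinset = Finset.Icc ρ.first.1 (ρ.first.1 + (d : ℤ))

/-- Left corner of some extent `d`: positions exactly `{k−d, …, k}`. -/
def IsLeftCorner (ρ : UPath N) : Prop :=
  ρ.steps ≠ [] ∧ ρ.last.1 = ρ.first.1 ∧
  ∃ d : ℕ, ρ.posFinset = Finset.Icc (ρ.first.1 - (d : ℤ)) ρ.first.1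

def IsCorner (ρ : UPath N) : Prop := ρ.IsRightCorner ∨ ρ.IsLeftCorner

/-- A corner is basic if its start/end position does not occur among the
positions of its intermediate vertices. -/
def IsBasic (ρ : UPath N) : Prop :=
  ∀ s ∈ ρ.steps.dropLast, s.2.1 ≠ ρ.first.1

/-- A long corner: a corner of extent exceeding `N²`. -/
def IsLongCorner (ρ : UPath N) : Prop := ρ.IsCorner ∧ (N : ℤ) ^ 2 < ρ.extent

/-- An lb-corner: a corner that is both long and basic. -/
def IsLBCorner (ρ : UPath N) : Prop := ρ.IsLongCorner ∧ ρ.IsBasic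

/-- `θ` is a (contiguous) subpath of `ρ`. -/
def IsSubpath (θ ρ : UPath N) : Prop :=
  ∃ pre post, ρ.steps = pre ++ θ.steps ++ post ∧ θ.first = (UPath.mk ρ.first pre).last

/-- A path is essential if its traversed variables are pairwise distinct,
except that the first and the last variable may coincide. -/
def IsEssential (ρ : UPath N) : Prop :=
  ∀ (a b : ℕ) (ha : a < ρ.varList.length) (hb : b < ρ.varList.length),
    a < b → ρ.varList.get ⟨a, ha⟩ = ρ.varList.get ⟨b, hb⟩ →
      a = 0 ∧ b = ρ.varList.length - 1

/-- An extremal path of `G_R^n`: both endpoints are at position `0` or `n`. -/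
def IsExtremalIn (n : ℕ) (ρ : UPath N) : Prop :=
  (ρ.first.1 = 0 ∨ ρ.first.1 = (n : ℤ)) ∧ (ρ.last.1 = 0 ∨ ρ.last.1 = (n : ℤ))

/-- `ρ'` is compatible with `ρ`: same first vertex, same last vertex and weight
not greater than that of `ρ`. -/
def Compatible (ρ' ρ : UPath N) : Prop :=
  ρ'.first = ρ.first ∧ ρ'.last = ρ.last ∧ ρ'.weight ≤ ρ.weight

/-- A path in `G_R^n` is normalized if none of its subpaths traversing only
positions in `{N², …, n−N²}` is a long corner. -/
def IsNormalized (n : ℕ) (ρ : UPath N) : Prop :=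
  ∀ θ : UPath N, θ.IsSubpath ρ →
    θ.posFinset ⊆ Finset.Icc ((N : ℤ) ^ 2) ((n : ℤ) - (N : ℤ) ^ 2) →
    ¬ θ.IsLongCorner

end UPath

/- ## UPath schemes -/

/-- `σ.λ*.σ'` is a path scheme: `λ` is empty or an essential repeating path,
the variables match up for concatenation, and `σ.λ.σ'` is a non-empty path. -/
def IsSchemeTriple (σ lam σ' : UPath N) : Prop :=
  (lam.steps = [] ∨ (lam.IsEssential ∧ lam.IsRepeating)) ∧
  lam.first.2 = σ.last.2 ∧ σ'.first.2 = lam.last.2 ∧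
  (σ.glue (lam.glue σ')).steps ≠ []

/-- The element `σ.λ^m.σ'` of the set of paths denoted by the scheme `σ.λ*.σ'`. -/
def schemeElem (σ lam σ' : UPath N) (m : ℕ) : UPath N :=
  σ.glue ((lam.pow m).glue σ')

/-- Shape of the `λ` component of a scheme of the class `Π_{ijkpq}`:
a path `x_k^(0) → … → x_k^(p)` of length `p` in the unfolding. -/
def LamShape (R : DBC N) (k : Fin N) (p : ℕ) (lam : UPath N) : Prop :=
  lam.InUnf R ∧ lam.first = ((0 : ℤ), k) ∧ lam.last = ((p : ℤ), k) ∧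
  lam.steps.length = p

/-- Shape of the `σ, σ'` components of a scheme of the class `Π_{ijkpq}`:
`σ : x_i^(0) → … → x_k^(r)` and `σ' : x_k^(r) → … → x_j^(q)` for some
`0 ≤ r ≤ q`, with `|σ.σ'| = q`. -/
def SigmaShape (R : DBC N) (i j k : Fin N) (q : ℕ) (σ σ' : UPath N) : Prop :=
  ∃ r : ℕ, r ≤ q ∧ σ.InUnf R ∧ σ'.InUnf R ∧
    σ.first = ((0 : ℤ), i) ∧ σ.last = ((r : ℤ), k) ∧
    σ'.first = ((r : ℤ), k) ∧ σ'.last = ((q : ℤ), j) ∧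
    σ.steps.length + σ'.steps.length = q

/-- Membership of the scheme `σ.λ*.σ'` in the class `Π_{ijkpq}`. -/
def InPi (R : DBC N) (i j k : Fin N) (p q : ℕ) (σ lam σ' : UPath N) : Prop :=
  IsSchemeTriple σ lam σ' ∧ LamShape R k p lam ∧ SigmaShape R i j k q σ σ'

/-- The set `S_ij` of quadruples `(|σ.σ'|, |λ|, w(σ.σ'), w(λ))` arising from the
minimal representative schemes `θ_{ijkpq}` of the nonempty classes `Π_{ijkpq}`. -/
def Sset (R : DBC N) (i j : Fin N) : Set (ℕ × ℕ × ℤ × ℤ) :=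
  { t | ∃ (k : Fin N) (p q : ℕ) (σ lam σ' : UPath N),
      p ≤ N ∧ q ≤ N ^ 4 ∧ 0 < p + q ∧
      (∃ ν μ ν' : UPath N, InPi R i j k p q ν μ ν') ∧
      LamShape R k p lam ∧
      (∀ lam', LamShape R k p lam' → lam.weight ≤ lam'.weight) ∧
      SigmaShape R i j k q σ σ' ∧
      (∀ σ₁ σ₁', SigmaShape R i j k q σ₁ σ₁' →
        σ.weight + σ'.weight ≤ σ₁.weight + σ₁'.weight) ∧
      t = (q, p, σ.weight + σ'.weight, lam.weight) }

/- ## Segments -/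

/-- An edge from `u` to `v` has both endpoints at positions within `{p, …, q}`. -/
def StepInRange (p q : ℤ) (u v : Vtx N) : Prop :=
  p ≤ u.1 ∧ u.1 ≤ q ∧ p ≤ v.1 ∧ v.1 ≤ q

/-- `ξ` is an element of `segments(ρ, p, q)`: a nonempty maximal subpath of `ρ`
whose positions lie within `{p, …, q}`, immediately preceded and followed (if at
all) by edges not lying within `{p, …, q}`. -/
def IsSegmentOf (ρ : UPath N) (p q : ℤ) (ξ : UPath N) : Prop :=
  ξ.steps ≠ [] ∧
  ∃ pre post, ρ.steps = pre ++ ξ.steps ++ post ∧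
    ξ.first = (UPath.mk ρ.first pre).last ∧
    ξ.posFinset ⊆ Finset.Icc p q ∧
    (∀ pre' c u, pre = pre' ++ [(c, u)] →
      ¬ StepInRange p q (UPath.mk ρ.first pre').last u) ∧
    (∀ c v post', post = (c, v) :: post' → ¬ StepInRange p q ξ.last v)

/- ## The strengthened relation and one-directional approximations -/

/-- `S_fw`: the valuations `ν` such that `∃ ν'. (ν,ν') ∈ R^{N²}`. -/
def Sfw (R : DBC N) (ν : Val N) : Prop := ∃ ν', relPow R.rel (N ^ 2) ν ν'

/-- `S_bw`: the valuations `ν'` such that `∃ ν. (ν,ν') ∈ R^{N²}`. -/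
def Sbw (R : DBC N) (ν' : Val N) : Prop := ∃ ν, relPow R.rel (N ^ 2) ν ν'

/-- The strengthened relation `R_s = R ∧ S_fw(x) ∧ S_bw(x')`. -/
def Rs (R : DBC N) (ν ν' : Val N) : Prop := R.rel ν ν' ∧ Sfw R ν ∧ Sbw R ν'

/-- `R_fw`: the strongest forward one-directional DB relation implied by `R_s`. -/
def Rfw (R : DBC N) (ν ν' : Val N) : Prop :=
  ∀ (i j : Fin N) (c : ℤ), (∀ μ μ', Rs R μ μ' → μ i - μ' j ≤ c) → ν i - ν' j ≤ c

/-- `R_bw`: the strongest backward one-directional DB relation implied by `R_s`. -/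
def Rbw (R : DBC N) (ν ν' : Val N) : Prop :=
  ∀ (i j : Fin N) (c : ℤ), (∀ μ μ', Rs R μ μ' → μ' i - μ j ≤ c) → ν' i - ν j ≤ c

/- ## Corner decompositions -/

/-- The pumped path `η.μ^k.τ.μ'^k.η'`. -/
def pumped (η μ τ μ' η' : UPath N) (k : ℕ) : UPath N :=
  η.glue ((μ.pow k).glue (τ.glue ((μ'.pow k).glue η')))

/-- The decomposition `ρ' = η.μ.τ.μ'.η'` of a right corner as in the corner
shortening / decomposition lemma. -/
def DecompRight (ρ' : UPath N) : Prop :=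
  ∃ η μ τ μ' η' : UPath N,
    ρ' = η.append (μ.append (τ.append (μ'.append η'))) ∧
    μ.first = η.last ∧ τ.first = μ.last ∧ μ'.first = τ.last ∧ η'.first = μ'.last ∧
    μ.IsForward ∧ μ.IsRepeating ∧ μ'.IsBackward ∧ μ'.IsRepeating ∧
    τ.IsRightCorner ∧
    η.relLen = η'.relLen ∧
    1 ≤ μ.relLen ∧ μ.relLen = μ'.relLen ∧ μ.relLen ≤ (N : ℤ) ^ 2 ∧
    μ.weight + μ'.weight < 0 ∧
    ∀ k : ℕ,
      (pumped η μ τ μ' η' k).IsRightCorner ∧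
      (∀ θ : UPath N, θ.IsSubpath (η.glue (μ.pow k)) → ¬ θ.IsLBCorner) ∧
      (∀ θ : UPath N, θ.IsSubpath ((μ'.pow k).glue η') → ¬ θ.IsLBCorner)

/-- The decomposition `ρ' = η.μ.τ.μ'.η'` of a left corner as in the corner
shortening / decomposition lemma. -/
def DecompLeft (ρ' : UPath N) : Prop :=
  ∃ η μ τ μ' η' : UPath N,
    ρ' = η.append (μ.append (τ.append (μ'.append η'))) ∧
    μ.first = η.last ∧ τ.first = μ.last ∧ μ'.first = τ.last ∧ η'.first = μ'.last ∧
    μ.IsBackward ∧ μ.IsRepeating ∧ μ'.IsForward ∧ μ'.IsRepeating ∧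
    τ.IsLeftCorner ∧
    η.relLen = η'.relLen ∧
    1 ≤ μ.relLen ∧ μ.relLen = μ'.relLen ∧ μ.relLen ≤ (N : ℤ) ^ 2 ∧
    μ.weight + μ'.weight < 0 ∧
    ∀ k : ℕ,
      (pumped η μ τ μ' η' k).IsLeftCorner ∧
      (∀ θ : UPath N, θ.IsSubpath (η.glue (μ.pow k)) → ¬ θ.IsLBCorner) ∧
      (∀ θ : UPath N, θ.IsSubpath ((μ'.pow k).glue η') → ¬ θ.IsLBCorner)

/- ## Balanced closure -/

/-- Swap an unprimed-unprimed atom with its primed-primed counterpart. -/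
def flipAtom : Atom N → Atom N
  | (Sum.inl i, Sum.inl j, c) => (Sum.inr i, Sum.inr j, c)
  | (Sum.inr i, Sum.inr j, c) => (Sum.inl i, Sum.inl j, c)
  | a => a

/-- The balanced closure `R_b` of a DB constraint `R`. -/
def DBC.balClosure (R : DBC N) : DBC N := ⟨R.atoms ∪ R.atoms.image flipAtom⟩

section Aux

variable {N : ℕ}

lemma relPow_chain {P : Val N → Val N → Prop} :
    ∀ (M : ℕ) (ν ν' : Val N), relPow P M ν ν' →
      ∃ g : ℕ → Val N, g 0 = ν ∧ g M = ν' ∧ ∀ t, t < M → P (g t) (g (t+1)) := by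
  intro M
  induction M with
  | zero =>
    intro ν ν' h
    exact ⟨fun _ => ν, rfl, h, fun t ht => absurd ht (by omega)⟩
  | succ M ih =>
    intro ν ν' h
    obtain ⟨μ, hP, hrest⟩ := h
    obtain ⟨g', h0, hM, hstep⟩ := ih μ ν' hrest
    refine ⟨fun t => match t with | 0 => ν | t+1 => g' t, rfl, hM, ?_⟩
    intro t ht
    match t with
    | 0 => simpa [h0] using hP
    | t+1 => exact hstep t (by omega)

lemma edge_bound (R : DBC N) (hbal : R.Balanced) (a b : ℤ) (hab : a < b)
    (f : ℤ → Val N) (hf : ∀ m, a ≤ m → m < b → R.rel (f m) (f (m+1)))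
    (u v : Vtx N) (c : ℤ) (h : R.Edge u v c)
    (hu1 : a ≤ u.1) (hu2 : u.1 ≤ b) (hv1 : a ≤ v.1) (hv2 : v.1 ≤ b) :
    f u.1 u.2 - f v.1 v.2 ≤ c := by
  obtain ⟨p, s, t, hmem, hu, hv⟩ := h
  subst hu hv
  cases s with
  | inl i' =>
    cases t with
    | inl j' =>
      simp only [endpt] at hu1 hu2 hv1 hv2 ⊢
      rcases lt_or_eq_of_le hu2 with hpb | hpb
      · have := hf p hu1 hpb (Sum.inl i', Sum.inl j', c) hmem
        simpa [interp] using this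
      · subst hpb
        have hmem' := (hbal i' j' c).mp hmem
        have h2 := hf (p - 1) (by omega) (by omega) (Sum.inr i', Sum.inr j', c) hmem'
        simpa [interp, show p - 1 + 1 = p by ring] using h2
    | inr j' =>
      simp only [endpt] at hu1 hu2 hv1 hv2 ⊢
      have := hf p hu1 (by omega) (Sum.inl i', Sum.inr j', c) hmem
      simpa [interp] using this
  | inr i' =>
    cases t with
    | inl j' =>
      simp only [endpt] at hu1 hu2 hv1 hv2 ⊢
      have := hf p hv1 (by omega) (Sum.inr i', Sum.inl j', c) hmem
      simpa [interp] using this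
    | inr j' =>
      simp only [endpt] at hu1 hu2 hv1 hv2 ⊢
      by_cases hpa : a ≤ p
      · have := hf p hpa (by omega) (Sum.inr i', Sum.inr j', c) hmem
        simpa [interp] using this
      · have hpa' : p + 1 = a := by omega
        have hmem' := (hbal i' j' c).mpr hmem
        have := hf a (le_refl a) hab (Sum.inl i', Sum.inl j', c) hmem'
        rw [hpa']
        simpa [interp] using this

lemma chain_bound (R : DBC N) (n : ℕ) (a b : ℤ) (f : ℤ → Val N)
    (hE : ∀ u v c, R.EdgeN n u v c → a ≤ u.1 → u.1 ≤ b → a ≤ v.1 → v.1 ≤ b →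
      f u.1 u.2 - f v.1 v.2 ≤ c) :
    ∀ (steps : List (ℤ × Vtx N)) (first : Vtx N),
      UPath.EdgeChain (R.EdgeN n) first steps →
      (∀ w ∈ (UPath.mk first steps).vertices, a ≤ w.1 ∧ w.1 ≤ b) →
      f first.1 first.2 - f (UPath.mk first steps).last.1 (UPath.mk first steps).last.2
        ≤ (UPath.mk first steps).weight := by
  intro steps
  induction steps with
  | nil =>
    intro first _ _
    simp [UPath.last, UPath.weight]
  | cons s rest ih =>
    intro first hchain hvtx
    obtain ⟨hedge, hchain'⟩ := hchain
    have hfirst := hvtx first (by simp [UPath.vertices])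
    have hs := hvtx s.2 (by simp [UPath.vertices])
    have h1 := hE first s.2 s.1 hedge hfirst.1 hfirst.2 hs.1 hs.2
    have h2 := ih s.2 hchain' (fun w hw => hvtx w (by
      simp [UPath.vertices] at hw ⊢; tauto))
    have hlast : (UPath.mk first (s :: rest)).last = (UPath.mk s.2 rest).last := by
      simp only [UPath.last, List.map_cons, List.getLastD_cons]
    have hw : (UPath.mk first (s :: rest)).weight = s.1 + (UPath.mk s.2 rest).weight := by
      simp [UPath.weight]
    rw [hlast, hw]
    linarith

lemma right_bound (R : DBC N) (hbal : R.Balanced) (n M : ℕ) (hM : 1 ≤ M)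
    (θ : UPath N) (hθ : θ.InUnfN R n)
    (k : ℤ) (d : ℕ) (hd : d ≤ M)
    (hpos : θ.posFinset = Finset.Icc k (k + d))
    (hfirst1 : θ.first.1 = k) (hlast1 : θ.last.1 = k)
    (g : ℕ → Val N) (hg : ∀ t, t < M → R.rel (g t) (g (t+1))) :
    g 0 θ.first.2 - g 0 θ.last.2 ≤ θ.weight := by
  set b : ℤ := k + max d 1 with hb
  set f : ℤ → Val N := fun q => g (q - k).toNat with hfdef
  have hf : ∀ m, k ≤ m → m < b → R.rel (f m) (f (m+1)) := by
    intro m h1 h2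
    have h3 : (m + 1 - k).toNat = (m - k).toNat + 1 := by omega
    have h4 : (m - k).toNat < M := by omega
    simpa [hfdef, h3] using hg _ h4
  have hab : k < b := by omega
  have hvtx : ∀ w ∈ θ.vertices, k ≤ w.1 ∧ w.1 ≤ b := by
    intro w hw
    have hmem : w.1 ∈ θ.posFinset := by
      rw [UPath.posFinset, List.mem_toFinset]
      exact List.mem_map_of_mem (f := Prod.fst) hw
    rw [hpos, Finset.mem_Icc] at hmem
    omega
  have := chain_bound R n k b f
    (fun u v c he hu1 hu2 hv1 hv2 => by
      obtain ⟨p, _, _, hE⟩ := he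
      exact edge_bound R hbal k b hab f hf u v c ⟨p, hE⟩ hu1 hu2 hv1 hv2)
    θ.steps θ.first hθ hvtx
  rw [show (UPath.mk θ.first θ.steps) = θ from rfl] at this
  rw [hfirst1, hlast1] at this
  have e0 : (k - k).toNat = 0 := by omega
  simpa [hfdef, e0] using this

lemma left_bound (R : DBC N) (hbal : R.Balanced) (n M : ℕ) (hM : 1 ≤ M)
    (θ : UPath N) (hθ : θ.InUnfN R n)
    (k : ℤ) (d : ℕ) (hd : d ≤ M)
    (hpos : θ.posFinset = Finset.Icc (k - d) k)
    (hfirst1 : θ.first.1 = k) (hlast1 : θ.last.1 = k)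
    (g : ℕ → Val N) (hg : ∀ t, t < M → R.rel (g t) (g (t+1))) :
    g M θ.first.2 - g M θ.last.2 ≤ θ.weight := by
  set a : ℤ := k - max d 1 with ha
  set f : ℤ → Val N := fun q => g (q - k + M).toNat with hfdef
  have hf : ∀ m, a ≤ m → m < k → R.rel (f m) (f (m+1)) := by
    intro m h1 h2
    have h3 : (m + 1 - k + M).toNat = (m - k + M).toNat + 1 := by omega
    have h4 : (m - k + M).toNat < M := by omega
    simpa [hfdef, h3] using hg _ h4
  have hab : a < k := by omega
  have hvtx : ∀ w ∈ θ.vertices, a ≤ w.1 ∧ w.1 ≤ k := by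
    intro w hw
    have hmem : w.1 ∈ θ.posFinset := by
      rw [UPath.posFinset, List.mem_toFinset]
      exact List.mem_map_of_mem (f := Prod.fst) hw
    rw [hpos, Finset.mem_Icc] at hmem
    omega
  have := chain_bound R n a k f
    (fun u v c he hu1 hu2 hv1 hv2 => by
      obtain ⟨p, _, _, hE⟩ := he
      exact edge_bound R hbal a k hab f hf u v c ⟨p, hE⟩ hu1 hu2 hv1 hv2)
    θ.steps θ.first hθ hvtx
  rw [show (UPath.mk θ.first θ.steps) = θ from rfl] at this
  rw [hfirst1, hlast1] at this
  have e0 : (k - k + (M : ℤ)).toNat = M := by omega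
  simpa [hfdef, e0] using this

end Aux

/-- Short corners are shortcut by the strengthened relation:
a short right (resp. left) corner `x_i^(k) → … → x_j^(k)` yields the bound
`x_i − x_j ≤ w(θ)` on `S_fw` (resp. on `S_bw`), and hence on `R_s`. -/
theorem statement16 (N : ℕ) (hN : 1 ≤ N) (R : DBC N) (hbal : R.Balanced)
    (n : ℕ) (hn : 1 ≤ n) (θ : UPath N) (hθ : θ.InUnfN R n)
    (hcor : θ.IsCorner) (hshort : θ.extent ≤ (N : ℤ) ^ 2)
    (k : ℤ) (i j : Fin N) (hf : θ.first = (k, i)) (hl : θ.last = (k, j)) :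
    (θ.IsRightCorner → ∀ ν : Val N, Sfw R ν → ν i - ν j ≤ θ.weight) ∧
    (θ.IsLeftCorner → ∀ ν' : Val N, Sbw R ν' → ν' i - ν' j ≤ θ.weight) ∧
    (∀ ν ν' : Val N, Rs R ν ν' →
      (θ.IsRightCorner → ν i - ν j ≤ θ.weight) ∧
      (θ.IsLeftCorner → ν' i - ν' j ≤ θ.weight)) := by
  have hcast : ((N ^ 2 : ℕ) : ℤ) = (N : ℤ) ^ 2 := by push_cast; ring
  have hM : 1 ≤ N ^ 2 := Nat.one_le_pow _ _ hN
  have right : θ.IsRightCorner → ∀ ν : Val N, Sfw R ν → ν i - ν j ≤ θ.weight := by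
    rintro ⟨hne, hlast, d, hpos⟩ ν ⟨ν', hrel⟩
    have hpos' : θ.posFinset = Finset.Icc k (k + d) := by rw [hpos, hf]
    have hmax : θ.posFinset.max' θ.posFinset_nonempty = k + d := by
      apply le_antisymm
      · exact Finset.max'_le _ _ _ (fun y hy => by
          rw [hpos', Finset.mem_Icc] at hy; exact hy.2)
      · exact Finset.le_max' _ _ (by rw [hpos', Finset.mem_Icc]; omega)
    have hmin : θ.posFinset.min' θ.posFinset_nonempty = k := by
      apply le_antisymm
      · exact Finset.min'_le _ _ (by rw [hpos', Finset.mem_Icc]; omega)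
      · exact Finset.le_min' _ _ _ (fun y hy => by
          rw [hpos', Finset.mem_Icc] at hy; exact hy.1)
    have hext : θ.extent = d := by rw [UPath.extent, hmax, hmin]; ring
    have hd : d ≤ N ^ 2 := by
      rw [hext] at hshort
      exact_mod_cast hcast ▸ hshort
    obtain ⟨g, hg0, hgM, hgstep⟩ := relPow_chain (N ^ 2) ν ν' hrel
    have key := right_bound R hbal n (N ^ 2) hM θ hθ k d hd hpos' (by rw [hf]) (by rw [hl]) g hgstep
    rw [hf, hl] at key
    simpa [hg0] using key
  have left : θ.IsLeftCorner → ∀ ν' : Val N, Sbw R ν' → ν' i - ν' j ≤ θ.weight := by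
    rintro ⟨hne, hlast, d, hpos⟩ ν' ⟨ν, hrel⟩
    have hpos' : θ.posFinset = Finset.Icc (k - d) k := by rw [hpos, hf]
    have hmax : θ.posFinset.max' θ.posFinset_nonempty = k := by
      apply le_antisymm
      · exact Finset.max'_le _ _ _ (fun y hy => by
          rw [hpos', Finset.mem_Icc] at hy; exact hy.2)
      · exact Finset.le_max' _ _ (by rw [hpos', Finset.mem_Icc]; omega)
    have hmin : θ.posFinset.min' θ.posFinset_nonempty = k - d := by
      apply le_antisymm
      · exact Finset.min'_le _ _ (by rw [hpos', Finset.mem_Icc]; omega)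
      · exact Finset.le_min' _ _ _ (fun y hy => by
          rw [hpos', Finset.mem_Icc] at hy; exact hy.1)
    have hext : θ.extent = d := by rw [UPath.extent, hmax, hmin]; ring
    have hd : d ≤ N ^ 2 := by
      rw [hext] at hshort
      exact_mod_cast hcast ▸ hshort
    obtain ⟨g, hg0, hgM, hgstep⟩ := relPow_chain (N ^ 2) ν ν' hrel
    have key := left_bound R hbal n (N ^ 2) hM θ hθ k d hd hpos' (by rw [hf]) (by rw [hl]) g hgstep
    rw [hf, hl] at key
    simpa [hgM] using key
  exact ⟨right, left, fun ν ν' hR => ⟨fun h => right h ν hR.2.1, fun h => left h ν' hR.2.2⟩⟩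
end

section
/- Let R(x,x') be a balanced difference bounds constraint over N variables, let n ≥ 1, and let ξ be an extremal path in G_R^n from x_i^(p) to x_j^(q) with 1 ≤ i,j ≤ N and p,q ∈ {0,n}, such that ξ has no long-corner subpath (lcorners(ξ) = ∅). Then for all valuations ν, ν' : x → ℤ such that (ν,ν') ∈ R_fw^n, (ν,ν') ∈ R_bw^n, ν ∈ S_fw, and ν' ∈ S_bw: (1) if p = 0 and q = n then ν(x_i) − ν'(x_j) ≤ w(ξ); (2) if p = n and q = 0 then ν'(x_i) − ν(x_j) ≤ w(ξ); (3) if p = q = 0 then ν(x_i) − ν(x_j) ≤ w(ξ); (4) if p = q = n then ν'(x_i) − ν'(x_j) ≤ w(ξ). -/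
variable {N : ℕ}

/- ## Auxiliary development for Statement 17 -/

namespace S17

open UPath

variable {N : ℕ}

/-- The last vertex of a path given as first vertex plus steps. -/
def lastV (u : Vtx N) (l : List (ℤ × Vtx N)) : Vtx N := (l.map Prod.snd).getLastD u

lemma last_mk (u : Vtx N) (l : List (ℤ × Vtx N)) : (UPath.mk u l).last = lastV u l := rfl

lemma lastV_nil (u : Vtx N) : lastV u [] = u := rfl

lemma lastV_cons (u : Vtx N) (s : ℤ × Vtx N) (l : List (ℤ × Vtx N)) :
    lastV u (s :: l) = lastV s.2 l := by
  unfold lastV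
  rw [List.map_cons, List.getLastD_cons]

lemma lastV_append (u : Vtx N) (l₁ l₂ : List (ℤ × Vtx N)) :
    lastV u (l₁ ++ l₂) = lastV (lastV u l₁) l₂ := by
  induction l₁ generalizing u with
  | nil => simp [lastV_nil]
  | cons s t ih => simp [lastV_cons, ih]

lemma lastV_mem (u : Vtx N) (l : List (ℤ × Vtx N)) : lastV u l ∈ u :: l.map Prod.snd :=
  List.getLastD_mem_cons

lemma chain_cons {E : Vtx N → Vtx N → ℤ → Prop} {u : Vtx N} {s : ℤ × Vtx N}
    {l : List (ℤ × Vtx N)} :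
    EdgeChain E u (s :: l) ↔ E u s.2 s.1 ∧ EdgeChain E s.2 l := Iff.rfl

lemma chain_append {E : Vtx N → Vtx N → ℤ → Prop} (u : Vtx N) (l₁ l₂ : List (ℤ × Vtx N)) :
    EdgeChain E u (l₁ ++ l₂) ↔ EdgeChain E u l₁ ∧ EdgeChain E (lastV u l₁) l₂ := by
  induction l₁ generalizing u with
  | nil => simp [EdgeChain, lastV_nil]
  | cons s t ih => simp [chain_cons, ih, lastV_cons, and_assoc]

lemma chain_mono {E E' : Vtx N → Vtx N → ℤ → Prop} (h : ∀ a b c, E a b c → E' a b c) :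
    ∀ (u : Vtx N) (l : List (ℤ × Vtx N)), EdgeChain E u l → EdgeChain E' u l := by
  intro u l
  induction l generalizing u with
  | nil => intro _; trivial
  | cons s t ih => exact fun hc => ⟨h _ _ _ hc.1, ih s.2 hc.2⟩

lemma edge_stepbound (R : DBC N) {u v : Vtx N} {c : ℤ} (h : R.Edge u v c) :
    u.1 - 1 ≤ v.1 ∧ v.1 ≤ u.1 + 1 := by
  obtain ⟨p, s, t, ha, hu, hv⟩ := h
  cases s <;> cases t <;> subst hu hv <;> simp [endpt] <;> omega

lemma edge_up (R : DBC N) {u v : Vtx N} {c : ℤ} (h : R.Edge u v c) (hpos : v.1 = u.1 + 1) :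
    (Sum.inl u.2, Sum.inr v.2, c) ∈ R.atoms := by
  obtain ⟨p, s, t, ha, hu, hv⟩ := h
  cases s <;> cases t <;> subst hu hv <;> simp [endpt] at hpos ⊢ <;> first | omega | exact ha

lemma edge_down (R : DBC N) {u v : Vtx N} {c : ℤ} (h : R.Edge u v c) (hpos : v.1 = u.1 - 1) :
    (Sum.inr u.2, Sum.inl v.2, c) ∈ R.atoms := by
  obtain ⟨p, s, t, ha, hu, hv⟩ := h
  cases s <;> cases t <;> subst hu hv <;> simp [endpt] at hpos ⊢ <;> first | omega | exact ha

lemma window_of_chainN (R : DBC N) (n : ℕ) :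
    ∀ (u : Vtx N) (l : List (ℤ × Vtx N)), EdgeChain (R.EdgeN n) u l → 0 ≤ u.1 → u.1 ≤ (n : ℤ) →
      ∀ v ∈ u :: l.map Prod.snd, 0 ≤ v.1 ∧ v.1 ≤ (n : ℤ) := by
  intro u l
  induction l generalizing u with
  | nil => intro _ h0 h1 v hv; simp at hv; subst hv; exact ⟨h0, h1⟩
  | cons s t ih =>
    intro hc h0 h1 v hv
    obtain ⟨p, hp0, hpn, q, r, ha, hu, hv2⟩ := hc.1
    have hs : 0 ≤ s.2.1 ∧ s.2.1 ≤ (n : ℤ) := by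
      cases r <;> simp [endpt] at hv2 <;> rw [hv2] <;> simp <;> omega
    rcases List.mem_cons.1 hv with rfl | hv'
    · exact ⟨h0, h1⟩
    · exact ih s.2 hc.2 hs.1 hs.2 v (by simpa using hv')

/-- The key single-edge evaluation lemma on a valuation chain. -/
lemma eval_edge (R : DBC N) (hbal : R.Balanced) (f : ℕ → Val N) (M : ℕ) (hM : 1 ≤ M)
    (hf : ∀ m, m < M → R.rel (f m) (f (m+1))) (k : ℤ)
    (u v : Vtx N) (c : ℤ) (h : R.Edge u v c)
    (hu1 : k ≤ u.1) (hu2 : u.1 ≤ k + M) (hv1 : k ≤ v.1) (hv2 : v.1 ≤ k + M) :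
    f (u.1 - k).toNat u.2 - f (v.1 - k).toNat v.2 ≤ c := by
  obtain ⟨p, s, t, ha, hu, hv⟩ := h
  cases s with
  | inl a =>
    cases t with
    | inl b =>
      subst hu hv
      simp only [endpt] at hu1 hu2 hv1 hv2 ⊢
      by_cases hp : p < k + M
      · have h1 := hf (p - k).toNat (by omega) _ ha
        simpa [interp] using h1
      · have hpk : (p - k).toNat = M := by omega
        have hatom : ((Sum.inr a : Fin N ⊕ Fin N), Sum.inr b, c) ∈ R.atoms := (hbal a b c).1 ha
        have h1 := hf (M - 1) (by omega) _ hatom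
        have hM1 : M - 1 + 1 = M := by omega
        rw [hM1] at h1
        simpa [interp, hpk] using h1
    | inr b =>
      subst hu hv
      simp only [endpt] at hu1 hu2 hv1 hv2 ⊢
      have h1 := hf (p - k).toNat (by omega) _ ha
      have h2 : (p + 1 - k).toNat = (p - k).toNat + 1 := by omega
      rw [h2]
      simpa [interp] using h1
  | inr a =>
    cases t with
    | inl b =>
      subst hu hv
      simp only [endpt] at hu1 hu2 hv1 hv2 ⊢
      have h1 := hf (p - k).toNat (by omega) _ ha
      have h2 : (p + 1 - k).toNat = (p - k).toNat + 1 := by omega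
      rw [h2]
      simpa [interp] using h1
    | inr b =>
      subst hu hv
      simp only [endpt] at hu1 hu2 hv1 hv2 ⊢
      by_cases hp : k ≤ p
      · have h1 := hf (p - k).toNat (by omega) _ ha
        have h2 : (p + 1 - k).toNat = (p - k).toNat + 1 := by omega
        rw [h2]
        simpa [interp] using h1
      · have hpk : (p + 1 - k).toNat = 0 := by omega
        have hatom : ((Sum.inl a : Fin N ⊕ Fin N), Sum.inl b, c) ∈ R.atoms := (hbal a b c).2 ha
        have h1 := hf 0 (by omega) _ hatom
        simpa [interp, hpk] using h1

/-- Telescoping a chain of valuations along a path lying in a window `[k, k+M]`. -/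
lemma corner_bound (R : DBC N) (hbal : R.Balanced) (f : ℕ → Val N) (M : ℕ) (hM : 1 ≤ M)
    (hf : ∀ m, m < M → R.rel (f m) (f (m+1))) (k : ℤ) :
    ∀ (u : Vtx N) (l : List (ℤ × Vtx N)), EdgeChain R.Edge u l →
      (∀ v ∈ u :: l.map Prod.snd, k ≤ v.1 ∧ v.1 ≤ k + M) →
      f (u.1 - k).toNat u.2 - f ((lastV u l).1 - k).toNat (lastV u l).2 ≤
        (l.map Prod.fst).sum := by
  intro u l
  induction l generalizing u with
  | nil => intro _ _; simp [lastV_nil]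
  | cons s t ih =>
    intro hch hw
    have hu := hw u (by simp)
    have hs := hw s.2 (by simp)
    have e1 := eval_edge R hbal f M hM hf k u s.2 s.1 hch.1 hu.1 hu.2 hs.1 hs.2
    have e2 := ih s.2 hch.2 (fun v hv => hw v (by simp at hv ⊢; tauto))
    rw [lastV_cons]
    simp only [List.map_cons, List.sum_cons]
    linarith

lemma split_last {α : Type*} (P : α → Prop) :
    ∀ l : List α, (∃ x ∈ l, P x) →
      ∃ l₁ x l₂, l = l₁ ++ x :: l₂ ∧ P x ∧ ∀ y ∈ l₂, ¬ P y := by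
  intro l
  induction l with
  | nil => simp
  | cons a t ih =>
    intro h
    by_cases ht : ∃ x ∈ t, P x
    · obtain ⟨l₁, x, l₂, heq, hx, hl₂⟩ := ih ht
      exact ⟨a :: l₁, x, l₂, by rw [heq]; rfl, hx, hl₂⟩
    · push_neg at ht
      have hPa : P a := by
        rcases h with ⟨x, hx, hPx⟩
        rcases List.mem_cons.1 hx with rfl | hx'
        · exact hPx
        · exact absurd hPx (ht x hx')
      exact ⟨[], a, t, rfl, hPa, ht⟩

lemma relPow_succ_iff {P : Val N → Val N → Prop} {m : ℕ} {ν ν' : Val N} :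
    relPow P (m+1) ν ν' ↔ ∃ μ, P ν μ ∧ relPow P m μ ν' := Iff.rfl

lemma relPow_succ_right {P : Val N → Val N → Prop} :
    ∀ (m : ℕ) (ν ν' : Val N), relPow P (m+1) ν ν' → ∃ μ, relPow P m ν μ ∧ P μ ν' := by
  intro m
  induction m with
  | zero =>
    intro ν ν' h
    obtain ⟨μ, h1, h2⟩ := h
    have h2' : μ = ν' := h2
    exact ⟨ν, rfl, h2' ▸ h1⟩
  | succ m ih =>
    intro ν ν' h
    obtain ⟨κ, h1, h2⟩ := h
    obtain ⟨μ, h3, h4⟩ := ih κ ν' h2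
    exact ⟨μ, ⟨κ, h1, h3⟩, h4⟩

lemma relPow_chain {P : Val N → Val N → Prop} :
    ∀ (m : ℕ) (ν ν' : Val N), relPow P m ν ν' →
      ∃ f : ℕ → Val N, f 0 = ν ∧ f m = ν' ∧ ∀ k, k < m → P (f k) (f (k+1)) := by
  intro m
  induction m with
  | zero =>
    intro ν ν' h
    have h' : ν = ν' := h
    exact ⟨fun _ => ν, rfl, h' ▸ rfl, fun k hk => absurd hk (by omega)⟩
  | succ m ih =>
    intro ν ν' h
    obtain ⟨μ, h1, h2⟩ := h
    obtain ⟨f, hf0, hfm, hf⟩ := ih μ ν' h2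
    refine ⟨fun k => if k = 0 then ν else f (k - 1), by simp, by simp [hfm], ?_⟩
    intro k hk
    cases k with
    | zero => simpa [hf0] using h1
    | succ k => simpa using hf k (by omega)

lemma pos_chain' (R : DBC N) :
    ∀ (u : Vtx N) (l : List (ℤ × Vtx N)), EdgeChain R.Edge u l →
      List.Chain' (fun x y => |x - y| ≤ 1) (u.1 :: l.map (fun s => s.2.1)) := by
  intro u l
  induction l generalizing u with
  | nil => intro _; exact List.IsChain.singleton _
  | cons s t ih =>
    intro h
    have hb := edge_stepbound R h.1
    refine List.IsChain.cons_cons ?_ (ih s.2 h.2)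
    show |u.1 - s.2.1| ≤ 1
    rw [abs_le]; omega

lemma icc_of_chain :
    ∀ (l : List ℤ) (a : ℤ), List.Chain' (fun x y => |x - y| ≤ 1) (a :: l) →
      ∃ m M : ℤ, m ≤ a ∧ a ≤ M ∧ (a :: l).toFinset = Finset.Icc m M := by
  intro l
  induction l with
  | nil => exact fun a _ => ⟨a, a, le_rfl, le_rfl, by simp⟩
  | cons b t ih =>
    intro a h
    change List.IsChain _ (a :: b :: t) at h
    rw [List.isChain_cons_cons] at h
    have hab : |a - b| ≤ 1 := h.1
    rw [abs_le] at hab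
    obtain ⟨m, M, hmb, hbM, hIcc⟩ := ih b h.2
    refine ⟨min a m, max a M, min_le_left _ _, le_max_left _ _, ?_⟩
    have h1 : (a :: b :: t).toFinset = insert a ((b :: t).toFinset) := by
      simp [List.toFinset_cons]
    rw [h1, hIcc]
    ext x
    simp only [Finset.mem_insert, Finset.mem_Icc, le_min_iff, min_le_iff, le_max_iff,
      max_le_iff]
    omega

lemma vertices_mk (u : Vtx N) (l : List (ℤ × Vtx N)) :
    (UPath.mk u l).vertices = u :: l.map Prod.snd := rfl

lemma mem_posFinset {ρ : UPath N} {v : Vtx N} (h : v ∈ ρ.vertices) : v.1 ∈ ρ.posFinset := by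
  simp only [UPath.posFinset, UPath.posList, List.mem_toFinset, List.mem_map]
  exact ⟨v, h, rfl⟩

lemma posFinset_mem {ρ : UPath N} {x : ℤ} (h : x ∈ ρ.posFinset) :
    ∃ v ∈ ρ.vertices, v.1 = x := by
  simpa only [UPath.posFinset, UPath.posList, List.mem_toFinset, List.mem_map] using h

lemma posList_mk (u : Vtx N) (l : List (ℤ × Vtx N)) :
    (UPath.mk u l).posList = u.1 :: l.map (fun s => s.2.1) := by
  simp [UPath.posList, UPath.vertices, List.map_map]

lemma subpath_self (ξ : UPath N) : ξ.IsSubpath ξ := ⟨[], [], by simp, rfl⟩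

lemma subpath_trans {θ ρ ξ : UPath N} (h1 : θ.IsSubpath ρ) (h2 : ρ.IsSubpath ξ) :
    θ.IsSubpath ξ := by
  obtain ⟨p1, q1, hs1, hf1⟩ := h1
  obtain ⟨p2, q2, hs2, hf2⟩ := h2
  refine ⟨p2 ++ p1, q1 ++ q2, by rw [hs2, hs1]; simp, ?_⟩
  rw [hf1]
  show lastV ρ.first p1 = lastV ξ.first (p2 ++ p1)
  rw [lastV_append]
  have : ρ.first = lastV ξ.first p2 := hf2
  rw [this]

/-- A nonempty vertical path bounded below by its first position, all of whose
subpath constraints come from `ξ`, has all its positions within `N²` above. -/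
lemma small_right (hN : 1 ≤ N) (R : DBC N) (ξ : UPath N)
    (H : ∀ θ : UPath N, θ.IsSubpath ξ → ¬ θ.IsLongCorner)
    (u : Vtx N) (l : List (ℤ × Vtx N))
    (hch : EdgeChain R.Edge u l)
    (hsub : (UPath.mk u l).IsSubpath ξ)
    (hvert : (lastV u l).1 = u.1)
    (hlb : ∀ v ∈ u :: l.map Prod.snd, u.1 ≤ v.1) :
    ∀ v ∈ u :: l.map Prod.snd, v.1 ≤ u.1 + (N : ℤ)^2 := by
  rcases eq_or_ne l [] with rfl | hne
  · intro v hv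
    simp at hv
    subst hv
    have : (0:ℤ) ≤ (N:ℤ)^2 := by positivity
    omega
  · have hch' := pos_chain' R u l hch
    obtain ⟨m, M, hma, haM, hIcc⟩ := icc_of_chain _ _ hch'
    have hpf : (UPath.mk u l).posFinset = Finset.Icc m M := by
      rw [UPath.posFinset, posList_mk, hIcc]
    have hm : m = u.1 := by
      have hmmem : m ∈ (UPath.mk u l).posFinset := by
        rw [hpf]; exact Finset.mem_Icc.mpr ⟨le_rfl, le_trans hma haM⟩
      obtain ⟨v, hv, hvm⟩ := posFinset_mem hmmem
      have := hlb v (by rwa [vertices_mk] at hv)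
      omega
    subst hm
    have hcorner : (UPath.mk u l).IsRightCorner := by
      refine ⟨hne, hvert, (M - u.1).toNat, ?_⟩
      have hfst : (UPath.mk u l).first = u := rfl
      rw [hpf, hfst]
      congr 1
      omega
    have hext : ¬ ((UPath.mk u l).IsCorner ∧ (N:ℤ)^2 < (UPath.mk u l).extent) := H _ hsub
    have hexts : (UPath.mk u l).extent ≤ (N:ℤ)^2 := by
      by_contra hc
      exact hext ⟨Or.inl hcorner, by omega⟩
    have hne' := (UPath.mk u l).posFinset_nonempty
    have humem : u.1 ∈ (UPath.mk u l).posFinset := mem_posFinset (by simp [vertices_mk])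
    have hminle : (UPath.mk u l).posFinset.min' hne' ≤ u.1 := Finset.min'_le _ _ humem
    intro v hv
    have hvmem : v.1 ∈ (UPath.mk u l).posFinset := mem_posFinset (by rwa [vertices_mk])
    have hle := Finset.le_max' _ _ hvmem
    have := hexts
    rw [UPath.extent] at this
    omega

lemma small_left (hN : 1 ≤ N) (R : DBC N) (ξ : UPath N)
    (H : ∀ θ : UPath N, θ.IsSubpath ξ → ¬ θ.IsLongCorner)
    (u : Vtx N) (l : List (ℤ × Vtx N))
    (hch : EdgeChain R.Edge u l)
    (hsub : (UPath.mk u l).IsSubpath ξ)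
    (hvert : (lastV u l).1 = u.1)
    (hub : ∀ v ∈ u :: l.map Prod.snd, v.1 ≤ u.1) :
    ∀ v ∈ u :: l.map Prod.snd, u.1 - (N : ℤ)^2 ≤ v.1 := by
  rcases eq_or_ne l [] with rfl | hne
  · intro v hv
    simp at hv
    subst hv
    have : (0:ℤ) ≤ (N:ℤ)^2 := by positivity
    omega
  · have hch' := pos_chain' R u l hch
    obtain ⟨m, M, hma, haM, hIcc⟩ := icc_of_chain _ _ hch'
    have hpf : (UPath.mk u l).posFinset = Finset.Icc m M := by
      rw [UPath.posFinset, posList_mk, hIcc]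
    have hM : M = u.1 := by
      have hMmem : M ∈ (UPath.mk u l).posFinset := by
        rw [hpf]; exact Finset.mem_Icc.mpr ⟨le_trans hma haM, le_rfl⟩
      obtain ⟨v, hv, hvm⟩ := posFinset_mem hMmem
      have := hub v (by rwa [vertices_mk] at hv)
      omega
    subst hM
    have hcorner : (UPath.mk u l).IsLeftCorner := by
      refine ⟨hne, hvert, (u.1 - m).toNat, ?_⟩
      have hfst : (UPath.mk u l).first = u := rfl
      rw [hpf, hfst]
      congr 1
      omega
    have hext : ¬ ((UPath.mk u l).IsCorner ∧ (N:ℤ)^2 < (UPath.mk u l).extent) := H _ hsub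
    have hexts : (UPath.mk u l).extent ≤ (N:ℤ)^2 := by
      by_contra hc
      exact hext ⟨Or.inr hcorner, by omega⟩
    have hne' := (UPath.mk u l).posFinset_nonempty
    have humem : u.1 ∈ (UPath.mk u l).posFinset := mem_posFinset (by simp [vertices_mk])
    have hmaxge : u.1 ≤ (UPath.mk u l).posFinset.max' hne' := Finset.le_max' _ _ humem
    intro v hv
    have hvmem : v.1 ∈ (UPath.mk u l).posFinset := mem_posFinset (by rwa [vertices_mk])
    have hge := Finset.min'_le _ _ hvmem
    have := hexts
    rw [UPath.extent] at this
    omega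

/-- Split a forward-going path at its last up-crossing of the base level. -/
lemma split_fwd (R : DBC N) (b nz : ℤ) (hnz : b + 1 ≤ nz)
    (u : Vtx N) (l : List (ℤ × Vtx N))
    (hch : EdgeChain R.Edge u l) (hu : u.1 = b)
    (hlast : (lastV u l).1 = nz)
    (hlb : ∀ v ∈ u :: l.map Prod.snd, b ≤ v.1) :
    ∃ pre c₁ u₁ suf, l = pre ++ (c₁, u₁) :: suf ∧
      (lastV u pre).1 = b ∧ u₁.1 = b + 1 ∧ ∀ s ∈ suf, b + 1 ≤ s.2.1 := by
  by_cases hex : ∃ s ∈ l, s.2.1 ≤ b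
  · obtain ⟨l₁, s, l₂, rfl, hPs, hnP⟩ := split_last (fun s => s.2.1 ≤ b) l hex
    have hsb : s.2.1 = b := le_antisymm hPs (hlb s.2 (by simp))
    cases l₂ with
    | nil =>
      exfalso
      have : lastV u (l₁ ++ [s]) = s.2 := by
        rw [lastV_append, lastV_cons, lastV_nil]
      rw [this] at hlast
      omega
    | cons s' l₂' =>
      obtain ⟨c₁, u₁⟩ := s'
      have hpre : lastV u (l₁ ++ [s]) = s.2 := by
        rw [lastV_append, lastV_cons, lastV_nil]
      have hre : l₁ ++ s :: (c₁, u₁) :: l₂' = (l₁ ++ [s]) ++ (c₁, u₁) :: l₂' := by simp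
      have hch2 : EdgeChain R.Edge (lastV u (l₁ ++ [s])) ((c₁, u₁) :: l₂') := by
        rw [hre] at hch
        exact ((chain_append u (l₁ ++ [s]) _).1 hch).2
      have hedge : R.Edge s.2 u₁ c₁ := by rw [hpre] at hch2; exact hch2.1
      have hbnd := edge_stepbound R hedge
      have hgt : ¬ u₁.1 ≤ b := hnP (c₁, u₁) (by simp)
      refine ⟨l₁ ++ [s], c₁, u₁, l₂', by simp, by rw [hpre, hsb], by omega, ?_⟩
      intro s'' hs''
      have := hnP s'' (by simp [hs''])
      omega
  · push_neg at hex
    cases l with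
    | nil =>
      exfalso
      rw [lastV_nil] at hlast
      omega
    | cons s t =>
      obtain ⟨c₁, u₁⟩ := s
      have hedge : R.Edge u u₁ c₁ := hch.1
      have hbnd := edge_stepbound R hedge
      have := hex (c₁, u₁) (by simp)
      refine ⟨[], c₁, u₁, t, rfl, by rw [lastV_nil, hu], by simp at this ⊢; omega, ?_⟩
      intro s'' hs''
      have := hex s'' (by simp [hs''])
      omega

/-- Split a backward-going path at its last visit of the top level. -/
lemma split_bwd (R : DBC N) (h lo : ℤ) (hlo : lo + 1 ≤ h)
    (u : Vtx N) (l : List (ℤ × Vtx N))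
    (hch : EdgeChain R.Edge u l) (hu : u.1 = h)
    (hlast : (lastV u l).1 = lo)
    (hub : ∀ v ∈ u :: l.map Prod.snd, v.1 ≤ h) :
    ∃ pre c₁ u₁ suf, l = pre ++ (c₁, u₁) :: suf ∧
      (lastV u pre).1 = h ∧ u₁.1 = h - 1 ∧ ∀ s ∈ suf, s.2.1 ≤ h - 1 := by
  by_cases hex : ∃ s ∈ l, h ≤ s.2.1
  · obtain ⟨l₁, s, l₂, rfl, hPs, hnP⟩ := split_last (fun s => h ≤ s.2.1) l hex
    have hsb : s.2.1 = h := le_antisymm (hub s.2 (by simp)) hPs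
    cases l₂ with
    | nil =>
      exfalso
      have : lastV u (l₁ ++ [s]) = s.2 := by
        rw [lastV_append, lastV_cons, lastV_nil]
      rw [this] at hlast
      omega
    | cons s' l₂' =>
      obtain ⟨c₁, u₁⟩ := s'
      have hpre : lastV u (l₁ ++ [s]) = s.2 := by
        rw [lastV_append, lastV_cons, lastV_nil]
      have hre : l₁ ++ s :: (c₁, u₁) :: l₂' = (l₁ ++ [s]) ++ (c₁, u₁) :: l₂' := by simp
      have hch2 : EdgeChain R.Edge (lastV u (l₁ ++ [s])) ((c₁, u₁) :: l₂') := by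
        rw [hre] at hch
        exact ((chain_append u (l₁ ++ [s]) _).1 hch).2
      have hedge : R.Edge s.2 u₁ c₁ := by rw [hpre] at hch2; exact hch2.1
      have hbnd := edge_stepbound R hedge
      have hgt : ¬ h ≤ u₁.1 := hnP (c₁, u₁) (by simp)
      refine ⟨l₁ ++ [s], c₁, u₁, l₂', by simp, by rw [hpre, hsb], by omega, ?_⟩
      intro s'' hs''
      have := hnP s'' (by simp [hs''])
      omega
  · push_neg at hex
    cases l with
    | nil =>
      exfalso
      rw [lastV_nil] at hlast
      omega
    | cons s t =>
      obtain ⟨c₁, u₁⟩ := s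
      have hedge : R.Edge u u₁ c₁ := hch.1
      have hbnd := edge_stepbound R hedge
      have := hex (c₁, u₁) (by simp)
      refine ⟨[], c₁, u₁, t, rfl, by rw [lastV_nil, hu], by simp at this ⊢; omega, ?_⟩
      intro s'' hs''
      have := hex s'' (by simp [hs''])
      omega

/-- A vertical excursion above the base level, constrained via `S_fw`. -/
lemma head_constraint_fw (hN : 1 ≤ N) (R : DBC N) (hbal : R.Balanced)
    (ξ : UPath N) (H : ∀ θ : UPath N, θ.IsSubpath ξ → ¬ θ.IsLongCorner)
    (u : Vtx N) (pre : List (ℤ × Vtx N))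
    (hch : EdgeChain R.Edge u pre)
    (hsub : (UPath.mk u pre).IsSubpath ξ)
    (hvert : (lastV u pre).1 = u.1)
    (hlb : ∀ v ∈ u :: pre.map Prod.snd, u.1 ≤ v.1)
    (μ μ' : Val N) (hRs : Rs R μ μ') :
    μ u.2 - μ (lastV u pre).2 ≤ (pre.map Prod.fst).sum := by
  obtain ⟨hrel, ⟨η, hη⟩, -⟩ := hRs
  obtain ⟨g, hg0, hgM, hg⟩ := relPow_chain (N^2) μ η hη
  have hub := small_right hN R ξ H u pre hch hsub hvert hlb
  have hNN : 1 ≤ N^2 := Nat.one_le_pow _ _ (by omega)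
  have hb := corner_bound R hbal g (N^2) hNN hg u.1 u pre hch ?_
  · have h1 : (u.1 - u.1).toNat = 0 := by omega
    have h2 : ((lastV u pre).1 - u.1).toNat = 0 := by omega
    rw [h1, h2, hg0] at hb
    exact hb
  · intro v hv
    refine ⟨hlb v hv, ?_⟩
    have := hub v hv
    push_cast
    omega

/-- A vertical excursion below the top level, constrained via `S_bw`. -/
lemma head_constraint_bw (hN : 1 ≤ N) (R : DBC N) (hbal : R.Balanced)
    (ξ : UPath N) (H : ∀ θ : UPath N, θ.IsSubpath ξ → ¬ θ.IsLongCorner)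
    (u : Vtx N) (pre : List (ℤ × Vtx N))
    (hch : EdgeChain R.Edge u pre)
    (hsub : (UPath.mk u pre).IsSubpath ξ)
    (hvert : (lastV u pre).1 = u.1)
    (hub : ∀ v ∈ u :: pre.map Prod.snd, v.1 ≤ u.1)
    (μ μ' : Val N) (hRs : Rs R μ μ') :
    μ' u.2 - μ' (lastV u pre).2 ≤ (pre.map Prod.fst).sum := by
  obtain ⟨hrel, -, ⟨η, hη⟩⟩ := hRs
  obtain ⟨g, hg0, hgM, hg⟩ := relPow_chain (N^2) η μ' hη
  have hlb := small_left hN R ξ H u pre hch hsub hvert hub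
  have hNN : 1 ≤ N^2 := Nat.one_le_pow _ _ (by omega)
  have hb := corner_bound R hbal g (N^2) hNN hg (u.1 - (N^2 : ℕ)) u pre hch ?_
  · have h1 : (u.1 - (u.1 - (N^2 : ℕ))).toNat = N^2 := by omega
    have h2 : ((lastV u pre).1 - (u.1 - (N^2 : ℕ))).toNat = N^2 := by omega
    rw [h1, h2, hgM] at hb
    exact hb
  · intro v hv
    have h1 := hlb v hv
    have h2 := hub v hv
    push_cast at h1 ⊢
    omega

/-- A horizontal path constrained at the primed level. -/
lemma horiz_primed (R : DBC N) (hbal : R.Balanced) (k : ℤ) (u : Vtx N)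
    (l : List (ℤ × Vtx N)) (hch : EdgeChain R.Edge u l)
    (hpos : ∀ v ∈ u :: l.map Prod.snd, v.1 = k)
    (μ μ' : Val N) (hrel : R.rel μ μ') :
    μ' u.2 - μ' (lastV u l).2 ≤ (l.map Prod.fst).sum := by
  have hb := corner_bound R hbal (fun t => if t = 0 then μ else μ') 1 le_rfl
    (fun m hm => by
      have : m = 0 := by omega
      subst this
      simpa using hrel) (k - 1) u l hch
    (fun v hv => by rw [hpos v hv]; omega)
  have h1 : (u.1 - (k - 1)).toNat = 1 := by
    have := hpos u (by simp)
    omega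
  have h2 : ((lastV u l).1 - (k - 1)).toNat = 1 := by
    have := hpos _ (lastV_mem u l)
    omega
  rw [h1, h2] at hb
  simpa using hb

/-- A horizontal path constrained at the unprimed level. -/
lemma horiz_unprimed (R : DBC N) (hbal : R.Balanced) (k : ℤ) (u : Vtx N)
    (l : List (ℤ × Vtx N)) (hch : EdgeChain R.Edge u l)
    (hpos : ∀ v ∈ u :: l.map Prod.snd, v.1 = k)
    (μ μ' : Val N) (hrel : R.rel μ μ') :
    μ u.2 - μ (lastV u l).2 ≤ (l.map Prod.fst).sum := by
  have hb := corner_bound R hbal (fun t => if t = 0 then μ else μ') 1 le_rfl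
    (fun m hm => by
      have : m = 0 := by omega
      subst this
      simpa using hrel) k u l hch
    (fun v hv => by rw [hpos v hv]; omega)
  have h1 : (u.1 - k).toNat = 0 := by
    have := hpos u (by simp)
    omega
  have h2 : ((lastV u l).1 - k).toNat = 0 := by
    have := hpos _ (lastV_mem u l)
    omega
  rw [h1, h2] at hb
  simpa using hb

/-- Main forward lemma: a path climbing from level `b` to level `b+m+1`. -/
lemma fwd (hN : 1 ≤ N) (R : DBC N) (hbal : R.Balanced) :
    ∀ (m : ℕ) (b : ℤ) (u : Vtx N) (l : List (ℤ × Vtx N)) (ν ν' : Val N),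
      EdgeChain R.Edge u l → u.1 = b → (lastV u l).1 = b + m + 1 →
      (∀ v ∈ u :: l.map Prod.snd, b ≤ v.1 ∧ v.1 ≤ b + m + 1) →
      (∀ θ : UPath N, θ.IsSubpath (UPath.mk u l) → ¬ θ.IsLongCorner) →
      relPow (Rfw R) (m+1) ν ν' →
      ν u.2 - ν' (lastV u l).2 ≤ (l.map Prod.fst).sum := by
  intro m
  induction m with
  | zero =>
    intro b u l ν ν' hch hu hlast hw H hpow
    obtain ⟨pre, c₁, u₁, suf, rfl, hpre, hu₁, hsuf⟩ :=
      split_fwd R b (b + 0 + 1) (by omega) u l hch hu hlast (fun v hv => (hw v hv).1)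
    have hlast' : lastV u (pre ++ (c₁, u₁) :: suf) = lastV u₁ suf := by
      rw [lastV_append, lastV_cons]
    have hchsplit := (chain_append u pre ((c₁, u₁) :: suf)).1 hch
    have hchpre := hchsplit.1
    have hedge : R.Edge (lastV u pre) u₁ c₁ := hchsplit.2.1
    have hchsuf : EdgeChain R.Edge u₁ suf := hchsplit.2.2
    have hsubpre : (UPath.mk u pre).IsSubpath (UPath.mk u (pre ++ (c₁, u₁) :: suf)) :=
      ⟨[], (c₁, u₁) :: suf, by simp, rfl⟩
    have hlbpre : ∀ v ∈ u :: pre.map Prod.snd, u.1 ≤ v.1 := by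
      intro v hv
      have hv' : v ∈ u :: (pre ++ (c₁, u₁) :: suf).map Prod.snd := by
        simp at hv ⊢; tauto
      have := (hw v hv').1
      omega
    have hvertpre : (lastV u pre).1 = u.1 := by omega
    have hpos : ∀ v ∈ u₁ :: suf.map Prod.snd, v.1 = b + 1 := by
      intro v hv
      have hv' : v ∈ u :: (pre ++ (c₁, u₁) :: suf).map Prod.snd := by
        simp at hv ⊢; tauto
      have h2 := (hw v hv').2
      rcases List.mem_cons.1 hv with rfl | hv''
      · omega
      · obtain ⟨s, hs, rfl⟩ := List.mem_map.1 hv''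
        have := hsuf s hs
        omega
    have hatom : (Sum.inl (lastV u pre).2, Sum.inr u₁.2, c₁) ∈ R.atoms :=
      edge_up R hedge (by omega)
    have key : ∀ μ μ', Rs R μ μ' →
        μ u.2 - μ' (lastV u₁ suf).2 ≤
          (pre.map Prod.fst).sum + c₁ + (suf.map Prod.fst).sum := by
      intro μ μ' hRs
      have k1 := head_constraint_fw hN R hbal _ H u pre hchpre hsubpre hvertpre hlbpre μ μ' hRs
      have k2 : μ (lastV u pre).2 - μ' u₁.2 ≤ c₁ := by
        have := hRs.1 _ hatom
        simpa [interp] using this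
      have k3 := horiz_primed R hbal (b + 1) u₁ suf hchsuf hpos μ μ' hRs.1
      linarith
    rw [relPow_succ_iff] at hpow
    obtain ⟨μ, hRfw, hEq⟩ := hpow
    have hμ : μ = ν' := hEq
    subst hμ
    have hres := hRfw u.2 (lastV u₁ suf).2 _ key
    rw [hlast']
    simp only [List.map_append, List.sum_append, List.map_cons, List.sum_cons]
    linarith
  | succ m ih =>
    intro b u l ν ν' hch hu hlast hw H hpow
    simp only [Nat.cast_add, Nat.cast_one] at hu hlast hw
    obtain ⟨pre, c₁, u₁, suf, rfl, hpre, hu₁, hsuf⟩ :=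
      split_fwd R b (b + (m+1) + 1) (by omega) u l hch hu hlast (fun v hv => (hw v hv).1)
    have hlast' : lastV u (pre ++ (c₁, u₁) :: suf) = lastV u₁ suf := by
      rw [lastV_append, lastV_cons]
    have hchsplit := (chain_append u pre ((c₁, u₁) :: suf)).1 hch
    have hchpre := hchsplit.1
    have hedge : R.Edge (lastV u pre) u₁ c₁ := hchsplit.2.1
    have hchsuf : EdgeChain R.Edge u₁ suf := hchsplit.2.2
    have hsubpre : (UPath.mk u pre).IsSubpath (UPath.mk u (pre ++ (c₁, u₁) :: suf)) :=
      ⟨[], (c₁, u₁) :: suf, by simp, rfl⟩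
    have hsubsuf : (UPath.mk u₁ suf).IsSubpath (UPath.mk u (pre ++ (c₁, u₁) :: suf)) := by
      refine ⟨pre ++ [(c₁, u₁)], [], by simp, ?_⟩
      show u₁ = lastV u (pre ++ [(c₁, u₁)])
      rw [lastV_append, lastV_cons, lastV_nil]
    have hlbpre : ∀ v ∈ u :: pre.map Prod.snd, u.1 ≤ v.1 := by
      intro v hv
      have hv' : v ∈ u :: (pre ++ (c₁, u₁) :: suf).map Prod.snd := by
        simp at hv ⊢; tauto
      have := (hw v hv').1
      omega
    have hvertpre : (lastV u pre).1 = u.1 := by omega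
    have hatom : (Sum.inl (lastV u pre).2, Sum.inr u₁.2, c₁) ∈ R.atoms :=
      edge_up R hedge (by omega)
    have key : ∀ μ μ', Rs R μ μ' →
        μ u.2 - μ' u₁.2 ≤ (pre.map Prod.fst).sum + c₁ := by
      intro μ μ' hRs
      have k1 := head_constraint_fw hN R hbal _ H u pre hchpre hsubpre hvertpre hlbpre μ μ' hRs
      have k2 : μ (lastV u pre).2 - μ' u₁.2 ≤ c₁ := by
        have := hRs.1 _ hatom
        simpa [interp] using this
      linarith
    rw [relPow_succ_iff] at hpow
    obtain ⟨μ₁, hRfw, hrest⟩ := hpow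
    have step1 := hRfw u.2 u₁.2 _ key
    have hlast'' : (lastV u₁ suf).1 = (b + 1) + m + 1 := by
      rw [hlast'] at hlast
      omega
    have hw' : ∀ v ∈ u₁ :: suf.map Prod.snd, b + 1 ≤ v.1 ∧ v.1 ≤ (b + 1) + m + 1 := by
      intro v hv
      have hv' : v ∈ u :: (pre ++ (c₁, u₁) :: suf).map Prod.snd := by
        simp at hv ⊢; tauto
      have h2 := (hw v hv').2
      rcases List.mem_cons.1 hv with rfl | hv''
      · exact ⟨by omega, by omega⟩
      · obtain ⟨s, hs, rfl⟩ := List.mem_map.1 hv''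
        have := hsuf s hs
        exact ⟨by omega, by omega⟩
    have H' : ∀ θ : UPath N, θ.IsSubpath (UPath.mk u₁ suf) → ¬ θ.IsLongCorner :=
      fun θ hθ => H θ (subpath_trans hθ hsubsuf)
    have step2 := ih (b + 1) u₁ suf μ₁ ν' hchsuf hu₁ hlast'' hw' H' hrest
    rw [hlast']
    simp only [List.map_append, List.sum_append, List.map_cons, List.sum_cons]
    linarith

/-- Main backward lemma: a path descending from level `b+m+1` to level `b`. -/
lemma bwd (hN : 1 ≤ N) (R : DBC N) (hbal : R.Balanced) :
    ∀ (m : ℕ) (b : ℤ) (u : Vtx N) (l : List (ℤ × Vtx N)) (ν ν' : Val N),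
      EdgeChain R.Edge u l → u.1 = b + m + 1 → (lastV u l).1 = b →
      (∀ v ∈ u :: l.map Prod.snd, b ≤ v.1 ∧ v.1 ≤ b + m + 1) →
      (∀ θ : UPath N, θ.IsSubpath (UPath.mk u l) → ¬ θ.IsLongCorner) →
      relPow (Rbw R) (m+1) ν ν' →
      ν' u.2 - ν (lastV u l).2 ≤ (l.map Prod.fst).sum := by
  intro m
  induction m with
  | zero =>
    intro b u l ν ν' hch hu hlast hw H hpow
    obtain ⟨pre, c₁, u₁, suf, rfl, hpre, hu₁, hsuf⟩ :=
      split_bwd R (b + 0 + 1) b (by omega) u l hch hu hlast (fun v hv => (hw v hv).2)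
    have hlast' : lastV u (pre ++ (c₁, u₁) :: suf) = lastV u₁ suf := by
      rw [lastV_append, lastV_cons]
    have hchsplit := (chain_append u pre ((c₁, u₁) :: suf)).1 hch
    have hchpre := hchsplit.1
    have hedge : R.Edge (lastV u pre) u₁ c₁ := hchsplit.2.1
    have hchsuf : EdgeChain R.Edge u₁ suf := hchsplit.2.2
    have hsubpre : (UPath.mk u pre).IsSubpath (UPath.mk u (pre ++ (c₁, u₁) :: suf)) :=
      ⟨[], (c₁, u₁) :: suf, by simp, rfl⟩
    have hubpre : ∀ v ∈ u :: pre.map Prod.snd, v.1 ≤ u.1 := by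
      intro v hv
      have hv' : v ∈ u :: (pre ++ (c₁, u₁) :: suf).map Prod.snd := by
        simp at hv ⊢; tauto
      have := (hw v hv').2
      omega
    have hvertpre : (lastV u pre).1 = u.1 := by omega
    have hpos : ∀ v ∈ u₁ :: suf.map Prod.snd, v.1 = b := by
      intro v hv
      have hv' : v ∈ u :: (pre ++ (c₁, u₁) :: suf).map Prod.snd := by
        simp at hv ⊢; tauto
      have h2 := (hw v hv').1
      rcases List.mem_cons.1 hv with rfl | hv''
      · omega
      · obtain ⟨s, hs, rfl⟩ := List.mem_map.1 hv''
        have := hsuf s hs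
        omega
    have hatom : (Sum.inr (lastV u pre).2, Sum.inl u₁.2, c₁) ∈ R.atoms :=
      edge_down R hedge (by omega)
    have key : ∀ μ μ', Rs R μ μ' →
        μ' u.2 - μ (lastV u₁ suf).2 ≤
          (pre.map Prod.fst).sum + c₁ + (suf.map Prod.fst).sum := by
      intro μ μ' hRs
      have k1 := head_constraint_bw hN R hbal _ H u pre hchpre hsubpre hvertpre hubpre μ μ' hRs
      have k2 : μ' (lastV u pre).2 - μ u₁.2 ≤ c₁ := by
        have := hRs.1 _ hatom
        simpa [interp] using this
      have k3 := horiz_unprimed R hbal b u₁ suf hchsuf hpos μ μ' hRs.1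
      linarith
    rw [relPow_succ_iff] at hpow
    obtain ⟨μ, hRbw, hEq⟩ := hpow
    have hμ : μ = ν' := hEq
    subst hμ
    have hres := hRbw u.2 (lastV u₁ suf).2 _ key
    rw [hlast']
    simp only [List.map_append, List.sum_append, List.map_cons, List.sum_cons]
    linarith
  | succ m ih =>
    intro b u l ν ν' hch hu hlast hw H hpow
    simp only [Nat.cast_add, Nat.cast_one] at hu hlast hw
    obtain ⟨pre, c₁, u₁, suf, rfl, hpre, hu₁, hsuf⟩ :=
      split_bwd R (b + (m+1) + 1) b (by omega) u l hch hu hlast (fun v hv => (hw v hv).2)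
    have hlast' : lastV u (pre ++ (c₁, u₁) :: suf) = lastV u₁ suf := by
      rw [lastV_append, lastV_cons]
    have hchsplit := (chain_append u pre ((c₁, u₁) :: suf)).1 hch
    have hchpre := hchsplit.1
    have hedge : R.Edge (lastV u pre) u₁ c₁ := hchsplit.2.1
    have hchsuf : EdgeChain R.Edge u₁ suf := hchsplit.2.2
    have hsubpre : (UPath.mk u pre).IsSubpath (UPath.mk u (pre ++ (c₁, u₁) :: suf)) :=
      ⟨[], (c₁, u₁) :: suf, by simp, rfl⟩
    have hsubsuf : (UPath.mk u₁ suf).IsSubpath (UPath.mk u (pre ++ (c₁, u₁) :: suf)) := by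
      refine ⟨pre ++ [(c₁, u₁)], [], by simp, ?_⟩
      show u₁ = lastV u (pre ++ [(c₁, u₁)])
      rw [lastV_append, lastV_cons, lastV_nil]
    have hubpre : ∀ v ∈ u :: pre.map Prod.snd, v.1 ≤ u.1 := by
      intro v hv
      have hv' : v ∈ u :: (pre ++ (c₁, u₁) :: suf).map Prod.snd := by
        simp at hv ⊢; tauto
      have := (hw v hv').2
      omega
    have hvertpre : (lastV u pre).1 = u.1 := by omega
    have hatom : (Sum.inr (lastV u pre).2, Sum.inl u₁.2, c₁) ∈ R.atoms :=
      edge_down R hedge (by omega)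
    have key : ∀ μ μ', Rs R μ μ' →
        μ' u.2 - μ u₁.2 ≤ (pre.map Prod.fst).sum + c₁ := by
      intro μ μ' hRs
      have k1 := head_constraint_bw hN R hbal _ H u pre hchpre hsubpre hvertpre hubpre μ μ' hRs
      have k2 : μ' (lastV u pre).2 - μ u₁.2 ≤ c₁ := by
        have := hRs.1 _ hatom
        simpa [interp] using this
      linarith
    obtain ⟨κ, hrest, hRbw⟩ := relPow_succ_right (m+1) ν ν' hpow
    have step1 := hRbw u.2 u₁.2 _ key
    have hu₁' : u₁.1 = b + m + 1 := by omega
    have hw' : ∀ v ∈ u₁ :: suf.map Prod.snd, b ≤ v.1 ∧ v.1 ≤ b + m + 1 := by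
      intro v hv
      have hv' : v ∈ u :: (pre ++ (c₁, u₁) :: suf).map Prod.snd := by
        simp at hv ⊢; tauto
      have h1 := (hw v hv').1
      rcases List.mem_cons.1 hv with rfl | hv''
      · exact ⟨by omega, by omega⟩
      · obtain ⟨s, hs, rfl⟩ := List.mem_map.1 hv''
        have := hsuf s hs
        exact ⟨by omega, by omega⟩
    have H' : ∀ θ : UPath N, θ.IsSubpath (UPath.mk u₁ suf) → ¬ θ.IsLongCorner :=
      fun θ hθ => H θ (subpath_trans hθ hsubsuf)
    have step2 := ih b u₁ suf ν κ hchsuf hu₁' (by rw [hlast'] at hlast; exact hlast) hw' H' hrest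
    rw [hlast']
    simp only [List.map_append, List.sum_append, List.map_cons, List.sum_cons]
    linarith

end S17

/-- Encoding of extremal paths without long corners: the
formula `R_fw^n ∧ R_bw^n ∧ S_fw(x) ∧ S_bw(x')` implies the constraint of every
extremal path of `G_R^n` with no long-corner subpath. -/
theorem statement17 (N : ℕ) (hN : 1 ≤ N) (R : DBC N) (hbal : R.Balanced)
    (n : ℕ) (hn : 1 ≤ n) (ξ : UPath N) (i j : Fin N) (p q : ℤ)
    (hp : p = 0 ∨ p = (n : ℤ)) (hq : q = 0 ∨ q = (n : ℤ))
    (hf : ξ.first = (p, i)) (hl : ξ.last = (q, j))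
    (hξ : ξ.InUnfN R n)
    (hnolc : ∀ θ : UPath N, θ.IsSubpath ξ → ¬ θ.IsLongCorner) :
    ∀ ν ν' : Val N, relPow (Rfw R) n ν ν' → relPow (Rbw R) n ν ν' →
      Sfw R ν → Sbw R ν' →
      (p = 0 ∧ q = (n : ℤ) → ν i - ν' j ≤ ξ.weight) ∧
      (p = (n : ℤ) ∧ q = 0 → ν' i - ν j ≤ ξ.weight) ∧
      (p = 0 ∧ q = 0 → ν i - ν j ≤ ξ.weight) ∧
      (p = (n : ℤ) ∧ q = (n : ℤ) → ν' i - ν' j ≤ ξ.weight) := by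
  intro ν ν' hfw hbw hSfw hSbw
  have hchain : UPath.EdgeChain R.Edge ξ.first ξ.steps :=
    S17.chain_mono (fun a b c h => by obtain ⟨pp, _, _, h⟩ := h; exact ⟨pp, h⟩)
      ξ.first ξ.steps hξ
  have hfp : ξ.first.1 = p := by rw [hf]
  have hlq : ξ.last.1 = q := by rw [hl]
  have hfi : ξ.first.2 = i := by rw [hf]
  have hlj : ξ.last.2 = j := by rw [hl]
  have hfirst01 : 0 ≤ ξ.first.1 ∧ ξ.first.1 ≤ (n : ℤ) := by
    rcases hp with h | h <;> rw [hfp, h] <;> constructor <;> omega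
  have hw := S17.window_of_chainN R n ξ.first ξ.steps hξ hfirst01.1 hfirst01.2
  have hNN : 1 ≤ N ^ 2 := Nat.one_le_pow _ _ (by omega)
  refine ⟨?_, ?_, ?_, ?_⟩
  · -- p = 0, q = n : forward
    rintro ⟨hp0, hqn⟩
    obtain ⟨m, rfl⟩ : ∃ m, n = m + 1 := ⟨n - 1, by omega⟩
    have hres := S17.fwd hN R hbal m 0 ξ.first ξ.steps ν ν' hchain
      (by omega)
      (by show ξ.last.1 = 0 + (m : ℤ) + 1; rw [hlq, hqn]; push_cast; ring)
      (by intro v hv; have := hw v hv; push_cast at this ⊢; omega)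
      hnolc hfw
    rw [hfi] at hres
    have h2 : (S17.lastV ξ.first ξ.steps).2 = j := hlj
    rw [h2] at hres
    exact hres
  · -- p = n, q = 0 : backward
    rintro ⟨hpn, hq0⟩
    obtain ⟨m, rfl⟩ : ∃ m, n = m + 1 := ⟨n - 1, by omega⟩
    have hres := S17.bwd hN R hbal m 0 ξ.first ξ.steps ν ν' hchain
      (by show ξ.first.1 = 0 + (m : ℤ) + 1; rw [hfp, hpn]; push_cast; ring)
      (by show ξ.last.1 = 0; rw [hlq, hq0])
      (by intro v hv; have := hw v hv; push_cast at this ⊢; omega)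
      hnolc hbw
    rw [hfi] at hres
    have h2 : (S17.lastV ξ.first ξ.steps).2 = j := hlj
    rw [h2] at hres
    exact hres
  · -- p = 0, q = 0 : right corner at the bottom, via S_fw
    rintro ⟨hp0, hq0⟩
    rcases eq_or_ne ξ.steps [] with hnil | hne
    · have h0 : ξ.last = ξ.first := by
        show (ξ.steps.map Prod.snd).getLastD ξ.first = ξ.first
        rw [hnil]; rfl
      rw [hf, hl] at h0
      have hij : j = i := by simpa using congrArg Prod.snd h0
      have hwt : ξ.weight = 0 := by
        show (ξ.steps.map Prod.fst).sum = 0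
        rw [hnil]; rfl
      rw [hij, hwt]; simp
    · obtain ⟨η, hη⟩ := hSfw
      obtain ⟨g, hg0, hgM, hg⟩ := S17.relPow_chain (N ^ 2) ν η hη
      have hvert : (S17.lastV ξ.first ξ.steps).1 = ξ.first.1 := by
        show ξ.last.1 = ξ.first.1; omega
      have hlb : ∀ v ∈ ξ.first :: ξ.steps.map Prod.snd, ξ.first.1 ≤ v.1 := by
        intro v hv; have := (hw v hv).1; omega
      have hub := S17.small_right hN R ξ hnolc ξ.first ξ.steps hchain
        (S17.subpath_self ξ) hvert hlb
      have hb := S17.corner_bound R hbal g (N ^ 2) hNN hg 0 ξ.first ξ.steps hchain ?_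
      · have h1 : (ξ.first.1 - 0).toNat = 0 := by omega
        have h2 : ((S17.lastV ξ.first ξ.steps).1 - 0).toNat = 0 := by omega
        rw [h1, h2, hg0] at hb
        rw [hfi] at hb
        have h3 : (S17.lastV ξ.first ξ.steps).2 = j := hlj
        rw [h3] at hb
        exact hb
      · intro v hv
        have h1 := (hw v hv).1
        have h2 := hub v hv
        push_cast at h2 ⊢
        omega
  · -- p = n, q = n : left corner at the top, via S_bw
    rintro ⟨hpn, hqn⟩
    rcases eq_or_ne ξ.steps [] with hnil | hne
    · have h0 : ξ.last = ξ.first := by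
        show (ξ.steps.map Prod.snd).getLastD ξ.first = ξ.first
        rw [hnil]; rfl
      rw [hf, hl] at h0
      have hij : j = i := by simpa using congrArg Prod.snd h0
      have hwt : ξ.weight = 0 := by
        show (ξ.steps.map Prod.fst).sum = 0
        rw [hnil]; rfl
      rw [hij, hwt]; simp
    · obtain ⟨η, hη⟩ := hSbw
      obtain ⟨g, hg0, hgM, hg⟩ := S17.relPow_chain (N ^ 2) η ν' hη
      have hvert : (S17.lastV ξ.first ξ.steps).1 = ξ.first.1 := by
        show ξ.last.1 = ξ.first.1; omega
      have hub' : ∀ v ∈ ξ.first :: ξ.steps.map Prod.snd, v.1 ≤ ξ.first.1 := by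
        intro v hv; have := (hw v hv).2; omega
      have hlb' := S17.small_left hN R ξ hnolc ξ.first ξ.steps hchain
        (S17.subpath_self ξ) hvert hub'
      have hb := S17.corner_bound R hbal g (N ^ 2) hNN hg ((n : ℤ) - (N ^ 2 : ℕ))
        ξ.first ξ.steps hchain ?_
      · have h1 : (ξ.first.1 - ((n : ℤ) - (N ^ 2 : ℕ))).toNat = N ^ 2 := by omega
        have h2 : ((S17.lastV ξ.first ξ.steps).1 - ((n : ℤ) - (N ^ 2 : ℕ))).toNat = N ^ 2 := by
          omega
        rw [h1, h2, hgM] at hb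
        rw [hfi] at hb
        have h3 : (S17.lastV ξ.first ξ.steps).2 = j := hlj
        rw [h3] at hb
        exact hb
      · intro v hv
        have h1 := (hw v hv).2
        have h2 := hlb' v hv
        push_cast at h2 ⊢
        omega
end

section
/- Let R(x,x') be a balanced difference bounds constraint over N variables, let n ≥ 1, and let ρ be an extremal normalized path in G_R^{2N²+n}, from x_i^(p) to x_j^(q) with 1 ≤ i,j ≤ N and p,q ∈ {0, 2N²+n}. Then for all valuations ν, ν' : x → ℤ such that there exist valuations μ, κ with (ν,μ) ∈ R^{N²}, (μ,κ) ∈ R_fw^n, (μ,κ) ∈ R_bw^n, μ ∈ S_fw, κ ∈ S_bw, and (κ,ν') ∈ R^{N²}: (1) if p = 0 and q = 2N²+n then ν(x_i) − ν'(x_j) ≤ w(ρ); (2) if p = 2N²+n and q = 0 then ν'(x_i) − ν(x_j) ≤ w(ρ); (3) if p = q = 0 then ν(x_i) − ν(x_j) ≤ w(ρ); (4) if p = q = 2N²+n then ν'(x_i) − ν'(x_j) ≤ w(ρ). -/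
variable {N : ℕ}

/- ## Auxiliary machinery for Statement 18 -/

namespace St18

open UPath

variable {N : ℕ}

/-- Last vertex of a walk given by a start vertex and a list of steps. -/
def lastV (u : Vtx N) (l : List (ℤ × Vtx N)) : Vtx N := (l.map Prod.snd).getLastD u

/-- Total weight of a list of steps. -/
def wsum (l : List (ℤ × Vtx N)) : ℤ := (l.map Prod.fst).sum

@[simp] lemma lastV_nil (u : Vtx N) : lastV u [] = u := rfl

@[simp] lemma lastV_cons (u : Vtx N) (s : ℤ × Vtx N) (l : List (ℤ × Vtx N)) :
    lastV u (s :: l) = lastV s.2 l := by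
  simp only [lastV, List.map_cons, List.getLastD_cons]

lemma lastV_append (u : Vtx N) (l₁ l₂ : List (ℤ × Vtx N)) :
    lastV u (l₁ ++ l₂) = lastV (lastV u l₁) l₂ := by
  induction l₁ generalizing u with
  | nil => simp
  | cons s l ih => simp [ih]

lemma lastV_concat (u : Vtx N) (l : List (ℤ × Vtx N)) (s : ℤ × Vtx N) :
    lastV u (l ++ [s]) = s.2 := by
  rw [lastV_append]; rfl

lemma lastV_mem {l : List (ℤ × Vtx N)} (h : l ≠ []) (u : Vtx N) :
    lastV u l ∈ l.map Prod.snd := by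
  induction l generalizing u with
  | nil => exact absurd rfl h
  | cons s l ih =>
    rcases eq_or_ne l [] with rfl | hl
    · simp [lastV]
    · simpa using Or.inr (ih hl s.2)

@[simp] lemma wsum_nil : wsum ([] : List (ℤ × Vtx N)) = 0 := rfl

@[simp] lemma wsum_cons (s : ℤ × Vtx N) (l : List (ℤ × Vtx N)) :
    wsum (s :: l) = s.1 + wsum l := by simp [wsum]

@[simp] lemma wsum_append (l₁ l₂ : List (ℤ × Vtx N)) :
    wsum (l₁ ++ l₂) = wsum l₁ + wsum l₂ := by simp [wsum]

@[simp] lemma edgeChain_nil {E : Vtx N → Vtx N → ℤ → Prop} (u : Vtx N) :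
    EdgeChain E u [] := trivial

lemma edgeChain_cons {E : Vtx N → Vtx N → ℤ → Prop} {u : Vtx N} {s : ℤ × Vtx N}
    {l : List (ℤ × Vtx N)} :
    EdgeChain E u (s :: l) ↔ E u s.2 s.1 ∧ EdgeChain E s.2 l := Iff.rfl

lemma edgeChain_append {E : Vtx N → Vtx N → ℤ → Prop} {u : Vtx N}
    {l₁ l₂ : List (ℤ × Vtx N)} :
    EdgeChain E u (l₁ ++ l₂) ↔ EdgeChain E u l₁ ∧ EdgeChain E (lastV u l₁) l₂ := by
  induction l₁ generalizing u with
  | nil => simp [edgeChain_cons]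
  | cons s l ih =>
    simp only [List.cons_append, edgeChain_cons, ih, lastV_cons, and_assoc]

lemma split_last {α : Type*} {P : α → Prop} :
    ∀ {l : List α}, (∃ x ∈ l, P x) →
      ∃ l₁ x l₂, l = l₁ ++ x :: l₂ ∧ P x ∧ ∀ y ∈ l₂, ¬ P y := by
  intro l
  induction l with
  | nil => rintro ⟨x, hx, -⟩; simp at hx
  | cons a l ih =>
    intro h
    by_cases h' : ∃ x ∈ l, P x
    · obtain ⟨l₁, x, l₂, rfl, hx, hl₂⟩ := ih h'
      exact ⟨a :: l₁, x, l₂, rfl, hx, hl₂⟩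
    · have ha : P a := by
        obtain ⟨x, hx, hPx⟩ := h
        rcases List.mem_cons.1 hx with rfl | hx
        · exact hPx
        · exact absurd ⟨x, hx, hPx⟩ h'
      exact ⟨[], a, l, rfl, ha, fun y hy hPy => h' ⟨y, hy, hPy⟩⟩

lemma split_first {α : Type*} {P : α → Prop} :
    ∀ {l : List α}, (∃ x ∈ l, P x) →
      ∃ l₁ x l₂, l = l₁ ++ x :: l₂ ∧ P x ∧ ∀ y ∈ l₁, ¬ P y := by
  intro l
  induction l with
  | nil => rintro ⟨x, hx, -⟩; simp at hx
  | cons a l ih =>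
    intro h
    by_cases ha : P a
    · exact ⟨[], a, l, rfl, ha, by simp⟩
    · have h' : ∃ x ∈ l, P x := by
        obtain ⟨x, hx, hPx⟩ := h
        rcases List.mem_cons.1 hx with rfl | hx
        · exact absurd hPx ha
        · exact ⟨x, hx, hPx⟩
      obtain ⟨l₁, x, l₂, rfl, hx, hl₁⟩ := ih h'
      refine ⟨a :: l₁, x, l₂, rfl, hx, ?_⟩
      intro y hy
      rcases List.mem_cons.1 hy with rfl | hy
      · exact ha
      · exact hl₁ y hy

lemma mem_split {u y : Vtx N} {l : List (ℤ × Vtx N)}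
    (h : y ∈ u :: l.map Prod.snd) :
    ∃ l₁ l₂, l = l₁ ++ l₂ ∧ lastV u l₁ = y := by
  rcases List.mem_cons.1 h with rfl | h
  · exact ⟨[], l, rfl, rfl⟩
  · obtain ⟨s, hs, rfl⟩ := List.mem_map.1 h
    obtain ⟨l₁, l₂, rfl⟩ := List.append_of_mem hs
    exact ⟨l₁ ++ [s], l₂, by simp, lastV_concat _ _ _⟩

lemma mem_dropLast_append {α : Type*} {l₁ l₂ : List α} {x : α}
    (h : x ∈ l₂.dropLast) : x ∈ (l₁ ++ l₂).dropLast := by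
  induction l₁ with
  | nil => exact h
  | cons a l ih =>
    have hl₂ : l₂ ≠ [] := by rintro rfl; simp at h
    have hne : l ++ l₂ ≠ [] := by simp [hl₂]
    rw [List.cons_append]
    cases hll : l ++ l₂ with
    | nil => exact absurd hll hne
    | cons b t =>
      rw [List.dropLast_cons₂]
      rw [← hll]
      exact List.mem_cons_of_mem _ ih

lemma head_mem_dropLast_cons {α : Type*} {a : α} {l : List α} (h : l ≠ []) :
    a ∈ (a :: l).dropLast := by
  cases l with
  | nil => exact absurd rfl h
  | cons b t => rw [List.dropLast_cons₂]; exact List.mem_cons_self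

lemma mem_map_snd_right (Q : List (ℤ × Vtx N)) (s : ℤ × Vtx N)
    {l : List (ℤ × Vtx N)} {y : ℤ × Vtx N} (hy : y ∈ l) :
    y.2 ∈ (Q ++ s :: l).map Prod.snd := by
  simp only [List.map_append, List.map_cons, List.mem_append, List.mem_cons]
  exact Or.inr (Or.inr (List.mem_map_of_mem hy))

end St18
namespace St18

open UPath

variable {N : ℕ}

lemma edgeAt_pos {R : DBC N} {p : ℤ} {u v : Vtx N} {c : ℤ} (h : R.EdgeAt p u v c) :
    (u.1 = p ∨ u.1 = p + 1) ∧ (v.1 = p ∨ v.1 = p + 1) := by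
  obtain ⟨s, t, -, hu, hv⟩ := h
  subst hu; subst hv
  constructor
  · cases s <;> simp [endpt]
  · cases t <;> simp [endpt]

lemma edgeN_bounds {R : DBC N} {m : ℕ} {u v : Vtx N} {c : ℤ} (h : R.EdgeN m u v c) :
    (0:ℤ) ≤ u.1 ∧ u.1 ≤ m ∧ 0 ≤ v.1 ∧ v.1 ≤ m ∧ v.1 ≤ u.1 + 1 ∧ u.1 ≤ v.1 + 1 := by
  obtain ⟨p, hp0, hpm, hat⟩ := h
  obtain ⟨hu, hv⟩ := edgeAt_pos hat
  rcases hu with hu | hu <;> rcases hv with hv | hv <;> omega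

lemma edgeN_edgeAt {R : DBC N} {m : ℕ} {u v : Vtx N} {c : ℤ} (h : R.EdgeN m u v c) :
    ∃ p, R.EdgeAt p u v c := by
  obtain ⟨p, -, -, hat⟩ := h
  exact ⟨p, hat⟩

lemma edge_up {R : DBC N} {p : ℤ} {u v : Vtx N} {c : ℤ} (h : R.EdgeAt p u v c)
    (hd : v.1 = u.1 + 1) : (Sum.inl u.2, Sum.inr v.2, c) ∈ R.atoms := by
  obtain ⟨s, t, hat, hu, hv⟩ := h
  subst hu; subst hv
  cases s with
  | inl i =>
    cases t with
    | inl j => exfalso; simp only [endpt] at hd; omega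
    | inr j => simpa [endpt] using hat
  | inr i =>
    cases t with
    | inl j => exfalso; simp only [endpt] at hd; omega
    | inr j => exfalso; simp only [endpt] at hd; omega

lemma edge_down {R : DBC N} {p : ℤ} {u v : Vtx N} {c : ℤ} (h : R.EdgeAt p u v c)
    (hd : u.1 = v.1 + 1) : (Sum.inr u.2, Sum.inl v.2, c) ∈ R.atoms := by
  obtain ⟨s, t, hat, hu, hv⟩ := h
  subst hu; subst hv
  cases s with
  | inl i =>
    cases t with
    | inl j => exfalso; simp only [endpt] at hd; omega
    | inr j => exfalso; simp only [endpt] at hd; omega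
  | inr i =>
    cases t with
    | inl j => simpa [endpt] using hat
    | inr j => exfalso; simp only [endpt] at hd; omega

lemma ivt_up {E : Vtx N → Vtx N → ℤ → Prop} (hE : ∀ u v c, E u v c → v.1 ≤ u.1 + 1) :
    ∀ (l : List (ℤ × Vtx N)) (u : Vtx N), EdgeChain E u l → ∀ t : ℤ,
      u.1 ≤ t → t ≤ (lastV u l).1 → ∃ x ∈ u :: l.map Prod.snd, x.1 = t := by
  intro l
  induction l with
  | nil =>
    intro u _ t h1 h2
    exact ⟨u, by simp, le_antisymm h1 (by simpa using h2)⟩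
  | cons s l ih =>
    intro u hch t h1 h2
    rcases eq_or_lt_of_le h1 with heq | hlt
    · exact ⟨u, by simp, heq⟩
    · have hs := hE _ _ _ hch.1
      obtain ⟨x, hx, hxt⟩ := ih s.2 hch.2 t (by omega) (by simpa using h2)
      exact ⟨x, by simpa using Or.inr hx, hxt⟩

lemma ivt_down {E : Vtx N → Vtx N → ℤ → Prop} (hE : ∀ u v c, E u v c → u.1 ≤ v.1 + 1) :
    ∀ (l : List (ℤ × Vtx N)) (u : Vtx N), EdgeChain E u l → ∀ t : ℤ,
      t ≤ u.1 → (lastV u l).1 ≤ t → ∃ x ∈ u :: l.map Prod.snd, x.1 = t := by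
  intro l
  induction l with
  | nil =>
    intro u _ t h1 h2
    exact ⟨u, by simp, le_antisymm (by simpa using h2) h1⟩
  | cons s l ih =>
    intro u hch t h1 h2
    rcases eq_or_lt_of_le h1 with heq | hlt
    · exact ⟨u, by simp, heq.symm⟩
    · have hs := hE _ _ _ hch.1
      obtain ⟨x, hx, hxt⟩ := ih s.2 hch.2 t (by omega) (by simpa using h2)
      exact ⟨x, by simpa using Or.inr hx, hxt⟩

lemma chainEval {R : DBC N} (hbal : R.Balanced) (W : ℤ → Val N) (lo hi : ℤ)
    (hlt : lo < hi) (hW : ∀ a, lo ≤ a → a < hi → R.rel (W a) (W (a+1)))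
    {p : ℤ} {u v : Vtx N} {c : ℤ} (h : R.EdgeAt p u v c)
    (hu1 : lo ≤ u.1) (hu2 : u.1 ≤ hi) (hv1 : lo ≤ v.1) (hv2 : v.1 ≤ hi) :
    W u.1 u.2 - W v.1 v.2 ≤ c := by
  obtain ⟨s, t, hat, hu, hv⟩ := h
  subst hu; subst hv
  cases s with
  | inl i =>
    cases t with
    | inl j =>
      simp only [endpt] at *
      by_cases hph : p < hi
      · have := hW p hu1 hph _ hat
        simpa [interp] using this
      · have hp : p = hi := le_antisymm hu2 (not_lt.1 hph)
        have hat' : (Sum.inr i, Sum.inr j, c) ∈ R.atoms := (hbal i j c).1 hat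
        have hWp := hW (p-1) (by omega) (by omega) _ hat'
        rw [sub_add_cancel] at hWp
        simpa [interp] using hWp
    | inr j =>
      simp only [endpt] at *
      have := hW p hu1 (by omega) _ hat
      simpa [interp] using this
  | inr i =>
    cases t with
    | inl j =>
      simp only [endpt] at *
      have := hW p hv1 (by omega) _ hat
      simpa [interp] using this
    | inr j =>
      simp only [endpt] at *
      by_cases hpl : lo < p + 1
      · have := hW p (by omega) (by omega) _ hat
        simpa [interp] using this
      · have hp : p + 1 = lo := le_antisymm (not_lt.1 hpl) hu1
        have hat' : (Sum.inl i, Sum.inl j, c) ∈ R.atoms := (hbal i j c).2 hat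
        have hWp := hW (p+1) (by omega) (by omega) _ hat'
        simpa [interp] using hWp

lemma chainWalk {R : DBC N} (hbal : R.Balanced) (W : ℤ → Val N) (lo hi : ℤ)
    (hlt : lo < hi) (hW : ∀ a, lo ≤ a → a < hi → R.rel (W a) (W (a+1)))
    {E : Vtx N → Vtx N → ℤ → Prop} (hE : ∀ u v c, E u v c → ∃ p, R.EdgeAt p u v c) :
    ∀ (l : List (ℤ × Vtx N)) (u : Vtx N), EdgeChain E u l →
      (∀ x ∈ u :: l.map Prod.snd, lo ≤ x.1 ∧ x.1 ≤ hi) →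
      W u.1 u.2 - W (lastV u l).1 (lastV u l).2 ≤ wsum l := by
  intro l
  induction l with
  | nil => intro u _ _; simp
  | cons s l ih =>
    intro u hch hpos
    obtain ⟨p, hp⟩ := hE _ _ _ hch.1
    have hu := hpos u (by simp)
    have hs := hpos s.2 (by simp)
    have h1 := chainEval hbal W lo hi hlt hW hp hu.1 hu.2 hs.1 hs.2
    have h2 := ih s.2 hch.2 (fun x hx => hpos x (by
      rcases List.mem_cons.1 hx with rfl | hx
      · simp
      · simp [hx]))
    rw [lastV_cons] at *
    rw [wsum_cons]
    linarith

lemma relPow_chain {P : Val N → Val N → Prop} :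
    ∀ (k : ℕ) (a b : Val N), relPow P k a b →
      ∃ g : ℕ → Val N, g 0 = a ∧ g k = b ∧ ∀ t, t < k → P (g t) (g (t+1)) := by
  intro k
  induction k with
  | zero =>
    intro a b h
    exact ⟨fun _ => a, rfl, h ▸ rfl, fun t ht => absurd ht (by omega)⟩
  | succ k ih =>
    intro a b h
    obtain ⟨μ, hPμ, hrest⟩ := h
    obtain ⟨g, hg0, hgk, hgs⟩ := ih μ b hrest
    refine ⟨fun t => match t with | 0 => a | (t'+1) => g t', rfl, hgk, ?_⟩
    intro t ht
    match t with
    | 0 => simpa [hg0] using hPμ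
    | (t'+1) => exact hgs t' (by omega)

end St18
namespace St18

open UPath

variable {N : ℕ}

lemma foldFw {R : DBC N} (hbal : R.Balanced) {m K : ℕ} (hK : 1 ≤ K)
    {μ₀ : Val N} (g : ℕ → Val N) (hg0 : g 0 = μ₀)
    (hgs : ∀ t, t < K → R.rel (g t) (g (t+1)))
    {μ₀' : Val N} (hrel : R.rel μ₀ μ₀')
    {base : ℤ} {u : Vtx N} {Q : List (ℤ × Vtx N)}
    (hu : u.1 = base)
    (hchain : EdgeChain (R.EdgeN m) u Q)
    (hpos : ∀ x ∈ u :: Q.map Prod.snd, base ≤ x.1 ∧ x.1 ≤ base + (K:ℤ))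
    (hlast : (lastV u Q).1 = base)
    {c₁ : ℤ} {w₁ : Vtx N} (hcross : R.EdgeN m (lastV u Q) w₁ c₁)
    (hw₁ : w₁.1 = base + 1) :
    μ₀ u.2 - μ₀' w₁.2 ≤ wsum Q + c₁ := by
  have hQ : μ₀ u.2 - μ₀ (lastV u Q).2 ≤ wsum Q := by
    have hW : ∀ a : ℤ, base ≤ a → a < base + (K:ℤ) →
        R.rel ((fun a : ℤ => g (a - base).toNat) a)
          ((fun a : ℤ => g (a - base).toNat) (a+1)) := by
      intro a h1 h2
      have e : (a + 1 - base).toNat = (a - base).toNat + 1 := by omega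
      simp only [e]
      exact hgs _ (by omega)
    have hwalk := chainWalk hbal (fun a => g (a - base).toNat) base (base + (K:ℤ))
      (by omega) hW (fun u v c h => edgeN_edgeAt h) Q u hchain hpos
    simpa [hu, hlast, hg0] using hwalk
  have hcr : μ₀ (lastV u Q).2 - μ₀' w₁.2 ≤ c₁ := by
    obtain ⟨pc, hat⟩ := edgeN_edgeAt hcross
    have hatom := edge_up hat (by omega)
    have := hrel _ hatom
    simpa [interp] using this
  linarith

lemma foldBw {R : DBC N} (hbal : R.Balanced) {m K : ℕ} (hK : 1 ≤ K)
    {μ₀' : Val N} (g : ℕ → Val N) (hgK : g K = μ₀')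
    (hgs : ∀ t, t < K → R.rel (g t) (g (t+1)))
    {μ₀ : Val N} (hrel : R.rel μ₀ μ₀')
    {base : ℤ} {u : Vtx N} {Q : List (ℤ × Vtx N)}
    (hu : u.1 = base)
    (hchain : EdgeChain (R.EdgeN m) u Q)
    (hpos : ∀ x ∈ u :: Q.map Prod.snd, base - (K:ℤ) ≤ x.1 ∧ x.1 ≤ base)
    (hlast : (lastV u Q).1 = base)
    {c₁ : ℤ} {w₁ : Vtx N} (hcross : R.EdgeN m (lastV u Q) w₁ c₁)
    (hw₁ : w₁.1 = base - 1) :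
    μ₀' u.2 - μ₀ w₁.2 ≤ wsum Q + c₁ := by
  have hQ : μ₀' u.2 - μ₀' (lastV u Q).2 ≤ wsum Q := by
    have hW : ∀ a : ℤ, base - (K:ℤ) ≤ a → a < base →
        R.rel ((fun a : ℤ => g (a - base + K).toNat) a)
          ((fun a : ℤ => g (a - base + K).toNat) (a+1)) := by
      intro a h1 h2
      have e : (a + 1 - base + K).toNat = (a - base + K).toNat + 1 := by omega
      simp only [e]
      exact hgs _ (by omega)
    have hwalk := chainWalk hbal (fun a => g (a - base + K).toNat) (base - (K:ℤ)) base
      (by omega) hW (fun u v c h => edgeN_edgeAt h) Q u hchain hpos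
    have e0 : (base - base + (K:ℤ)).toNat = K := by omega
    simpa [hu, hlast, e0, hgK] using hwalk
  have hcr : μ₀' (lastV u Q).2 - μ₀ w₁.2 ≤ c₁ := by
    obtain ⟨pc, hat⟩ := edgeN_edgeAt hcross
    have hatom := edge_down hat (by omega)
    have := hrel _ hatom
    simpa [interp] using this
  linarith

lemma cornerBoundR {R : DBC N} {n : ℕ} {ρ : UPath N}
    (hnorm : ρ.IsNormalized (2 * N ^ 2 + n))
    {pre post Q : List (ℤ × Vtx N)} {u : Vtx N}
    (hsplit : ρ.steps = pre ++ (Q ++ post)) (hu : lastV ρ.first pre = u)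
    (hQne : Q ≠ [])
    (hchain : EdgeChain (R.EdgeN (2 * N ^ 2 + n)) u Q)
    (hlast : (lastV u Q).1 = u.1)
    (hlow : ∀ x ∈ u :: Q.map Prod.snd, u.1 ≤ x.1)
    (hband : ∀ x ∈ u :: Q.map Prod.snd, (N:ℤ)^2 ≤ x.1 ∧ x.1 ≤ (N:ℤ)^2 + n) :
    ∀ x ∈ u :: Q.map Prod.snd, x.1 ≤ u.1 + (N:ℤ)^2 := by
  set θ : UPath N := ⟨u, Q⟩ with hθ
  have hvert : θ.posList = (u :: Q.map Prod.snd).map Prod.fst := rfl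
  have hmem : ∀ t : ℤ, t ∈ θ.posFinset ↔ ∃ y ∈ u :: Q.map Prod.snd, y.1 = t := by
    intro t
    rw [UPath.posFinset, List.mem_toFinset, hvert, List.mem_map]
  have hne := θ.posFinset_nonempty
  set M := θ.posFinset.max' hne with hM
  have hu_mem : u.1 ∈ θ.posFinset := (hmem u.1).2 ⟨u, by simp, rfl⟩
  have huM : u.1 ≤ M := Finset.le_max' _ _ hu_mem
  have hMmem := Finset.max'_mem _ hne
  obtain ⟨y, hy, hyM⟩ := (hmem M).1 hMmem
  have hEb : ∀ (a b : Vtx N) (c : ℤ), R.EdgeN (2*N^2+n) a b c → b.1 ≤ a.1 + 1 :=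
    fun a b c h => (edgeN_bounds h).2.2.2.2.1
  have hIcc : θ.posFinset = Finset.Icc u.1 M := by
    ext t
    rw [hmem, Finset.mem_Icc]
    constructor
    · rintro ⟨y', hy', rfl⟩
      exact ⟨hlow y' hy', Finset.le_max' _ _ ((hmem y'.1).2 ⟨y', hy', rfl⟩)⟩
    · rintro ⟨h1, h2⟩
      obtain ⟨l₁, l₂, hQdec, hl₁⟩ := mem_split hy
      have hch₁ : EdgeChain (R.EdgeN (2*N^2+n)) u l₁ := by
        rw [hQdec] at hchain
        exact (edgeChain_append.1 hchain).1
      obtain ⟨x, hx, hxt⟩ := ivt_up hEb l₁ u hch₁ t h1 (by rw [hl₁, hyM]; exact h2)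
      refine ⟨x, ?_, hxt⟩
      rcases List.mem_cons.1 hx with rfl | hx
      · simp
      · rw [hQdec]
        simp only [List.map_append, List.mem_cons, List.mem_append]
        exact Or.inr (Or.inl hx)
  have hcor : θ.IsCorner := by
    left
    refine ⟨hQne, hlast, (M - u.1).toNat, ?_⟩
    show θ.posFinset = Finset.Icc u.1 (u.1 + ((M - u.1).toNat : ℤ))
    rw [hIcc]
    congr 1
    omega
  have hsub : θ.IsSubpath ρ := by
    refine ⟨pre, post, ?_, hu.symm⟩
    rw [hsplit, List.append_assoc]
  have hss : θ.posFinset ⊆ Finset.Icc ((N:ℤ)^2) (((2*N^2+n : ℕ) : ℤ) - (N:ℤ)^2) := by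
    intro t ht
    obtain ⟨y', hy', rfl⟩ := (hmem t).1 ht
    have hb := hband y' hy'
    rw [Finset.mem_Icc]
    refine ⟨hb.1, ?_⟩
    push_cast
    linarith [hb.2]
  have hnl := hnorm θ hsub hss
  have hext : θ.extent ≤ (N:ℤ)^2 := by
    by_contra hcon
    exact hnl ⟨hcor, not_le.mp hcon⟩
  have hmin' : θ.posFinset.min' hne = u.1 := by
    apply le_antisymm
    · exact Finset.min'_le _ _ hu_mem
    · apply Finset.le_min'
      intro y' hy'
      obtain ⟨z, hz, rfl⟩ := (hmem y').1 hy'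
      exact hlow z hz
  have he : θ.extent = M - u.1 := by
    rw [UPath.extent, hmin']
  rw [he] at hext
  intro x hx
  have : x.1 ≤ M := Finset.le_max' _ _ ((hmem x.1).2 ⟨x, hx, rfl⟩)
  linarith

lemma cornerBoundL {R : DBC N} {n : ℕ} {ρ : UPath N}
    (hnorm : ρ.IsNormalized (2 * N ^ 2 + n))
    {pre post Q : List (ℤ × Vtx N)} {u : Vtx N}
    (hsplit : ρ.steps = pre ++ (Q ++ post)) (hu : lastV ρ.first pre = u)
    (hQne : Q ≠ [])
    (hchain : EdgeChain (R.EdgeN (2 * N ^ 2 + n)) u Q)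
    (hlast : (lastV u Q).1 = u.1)
    (hhigh : ∀ x ∈ u :: Q.map Prod.snd, x.1 ≤ u.1)
    (hband : ∀ x ∈ u :: Q.map Prod.snd, (N:ℤ)^2 ≤ x.1 ∧ x.1 ≤ (N:ℤ)^2 + n) :
    ∀ x ∈ u :: Q.map Prod.snd, u.1 - (N:ℤ)^2 ≤ x.1 := by
  set θ : UPath N := ⟨u, Q⟩ with hθ
  have hvert : θ.posList = (u :: Q.map Prod.snd).map Prod.fst := rfl
  have hmem : ∀ t : ℤ, t ∈ θ.posFinset ↔ ∃ y ∈ u :: Q.map Prod.snd, y.1 = t := by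
    intro t
    rw [UPath.posFinset, List.mem_toFinset, hvert, List.mem_map]
  have hne := θ.posFinset_nonempty
  set M := θ.posFinset.min' hne with hM
  have hu_mem : u.1 ∈ θ.posFinset := (hmem u.1).2 ⟨u, by simp, rfl⟩
  have huM : M ≤ u.1 := Finset.min'_le _ _ hu_mem
  have hMmem := Finset.min'_mem _ hne
  obtain ⟨y, hy, hyM⟩ := (hmem M).1 hMmem
  have hEb : ∀ (a b : Vtx N) (c : ℤ), R.EdgeN (2*N^2+n) a b c → a.1 ≤ b.1 + 1 :=
    fun a b c h => (edgeN_bounds h).2.2.2.2.2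
  have hIcc : θ.posFinset = Finset.Icc M u.1 := by
    ext t
    rw [hmem, Finset.mem_Icc]
    constructor
    · rintro ⟨y', hy', rfl⟩
      exact ⟨Finset.min'_le _ _ ((hmem y'.1).2 ⟨y', hy', rfl⟩), hhigh y' hy'⟩
    · rintro ⟨h1, h2⟩
      obtain ⟨l₁, l₂, hQdec, hl₁⟩ := mem_split hy
      have hch₁ : EdgeChain (R.EdgeN (2*N^2+n)) u l₁ := by
        rw [hQdec] at hchain
        exact (edgeChain_append.1 hchain).1
      obtain ⟨x, hx, hxt⟩ := ivt_down hEb l₁ u hch₁ t h2 (by rw [hl₁, hyM]; exact h1)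
      refine ⟨x, ?_, hxt⟩
      rcases List.mem_cons.1 hx with rfl | hx
      · simp
      · rw [hQdec]
        simp only [List.map_append, List.mem_cons, List.mem_append]
        exact Or.inr (Or.inl hx)
  have hcor : θ.IsCorner := by
    right
    refine ⟨hQne, hlast, (u.1 - M).toNat, ?_⟩
    show θ.posFinset = Finset.Icc (u.1 - ((u.1 - M).toNat : ℤ)) u.1
    rw [hIcc]
    congr 1
    omega
  have hsub : θ.IsSubpath ρ := by
    refine ⟨pre, post, ?_, hu.symm⟩
    rw [hsplit, List.append_assoc]
  have hss : θ.posFinset ⊆ Finset.Icc ((N:ℤ)^2) (((2*N^2+n : ℕ) : ℤ) - (N:ℤ)^2) := by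
    intro t ht
    obtain ⟨y', hy', rfl⟩ := (hmem t).1 ht
    have hb := hband y' hy'
    rw [Finset.mem_Icc]
    refine ⟨hb.1, ?_⟩
    push_cast
    linarith [hb.2]
  have hnl := hnorm θ hsub hss
  have hext : θ.extent ≤ (N:ℤ)^2 := by
    by_contra hcon
    exact hnl ⟨hcor, not_le.mp hcon⟩
  have hmax' : θ.posFinset.max' hne = u.1 := by
    apply le_antisymm
    · apply Finset.max'_le
      intro y' hy'
      obtain ⟨z, hz, rfl⟩ := (hmem y').1 hy'
      exact hhigh z hz
    · exact Finset.le_max' _ _ hu_mem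
  have he : θ.extent = u.1 - M := by
    rw [UPath.extent, hmax']
  rw [he] at hext
  intro x hx
  have : M ≤ x.1 := Finset.min'_le _ _ ((hmem x.1).2 ⟨x, hx, rfl⟩)
  linarith

end St18
namespace St18

open UPath

variable {N : ℕ}

lemma fwPass {R : DBC N} (hbal : R.Balanced) (hN : 1 ≤ N) {n : ℕ} (hn : 1 ≤ n)
    {ρ : UPath N} (hnorm : ρ.IsNormalized (2 * N ^ 2 + n))
    (f : ℕ → Val N) (hfs : ∀ t, t < n → Rfw R (f t) (f (t+1))) :
    ∀ (L : ℕ) (l : List (ℤ × Vtx N)), l.length ≤ L →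
      ∀ (p : ℕ) (pre post : List (ℤ × Vtx N)) (u : Vtx N),
      ρ.steps = pre ++ (l ++ post) →
      lastV ρ.first pre = u →
      p ≤ n → u.1 = ((N^2 : ℕ) : ℤ) + p →
      EdgeChain (R.EdgeN (2 * N ^ 2 + n)) u l →
      (∀ x ∈ l.map Prod.snd, ((N^2:ℕ):ℤ) + p ≤ x.1 ∧ x.1 ≤ ((N^2:ℕ):ℤ) + n) →
      (∀ x ∈ (l.map Prod.snd).dropLast, x.1 ≠ ((N^2:ℕ):ℤ) + n) →
      (lastV u l).1 = ((N^2:ℕ):ℤ) + n →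
      (p = n → l = []) →
      f p u.2 - f n (lastV u l).2 ≤ wsum l := by
  have hK : 1 ≤ N^2 := Nat.one_le_pow _ _ hN
  have hBpow : ((N^2:ℕ):ℤ) = (N:ℤ)^2 := by push_cast; ring
  intro L
  induction L with
  | zero =>
    intro l hlen p pre post u hsp hpre hp hu1 hch hband hdl hend hemp
    have hl : l = [] := List.length_eq_zero_iff.1 (Nat.le_zero.1 hlen)
    subst hl
    simp only [lastV_nil] at hend ⊢
    have hpn : p = n := by rw [hu1] at hend; omega
    subst hpn
    simp
  | succ L ih =>
    intro l hlen p pre post u hsp hpre hp hu1 hch hband hdl hend hemp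
    cases l with
    | nil =>
      simp only [lastV_nil] at hend ⊢
      have hpn : p = n := by rw [hu1] at hend; omega
      subst hpn
      simp
    | cons s₀ l₀ =>
      have hpn : p < n := by
        rcases Nat.lt_or_ge p n with h | h
        · exact h
        · exact absurd (hemp (le_antisymm hp h)) (by simp)
      -- decompose: vertical chunk at base, crossing step, remainder
      obtain ⟨Q, c₁, w₁, l₂', hldec, hQlast, hnotbase⟩ :
          ∃ (Q : List (ℤ × Vtx N)) (c₁ : ℤ) (w₁ : Vtx N) (l₂' : List (ℤ × Vtx N)),
            s₀ :: l₀ = Q ++ (c₁, w₁) :: l₂' ∧ (lastV u Q).1 = ((N^2:ℕ):ℤ) + p ∧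
            ∀ y ∈ (c₁, w₁) :: l₂', y.2.1 ≠ ((N^2:ℕ):ℤ) + p := by
        by_cases hex : ∃ x ∈ s₀ :: l₀, x.2.1 = ((N^2:ℕ):ℤ) + p
        · obtain ⟨l₁, x, l₂, hdec, hx, hl₂⟩ := split_last hex
          have hl₂ne : l₂ ≠ [] := by
            rintro rfl
            rw [hdec] at hend
            rw [lastV_append] at hend
            simp only [lastV_cons, lastV_nil] at hend
            rw [hx] at hend
            omega
          obtain ⟨s₁, l₂', rfl⟩ : ∃ s₁ l₂', l₂ = s₁ :: l₂' := by
            cases l₂ with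
            | nil => exact absurd rfl hl₂ne
            | cons a t => exact ⟨a, t, rfl⟩
          refine ⟨l₁ ++ [x], s₁.1, s₁.2, l₂', by rw [hdec]; simp, ?_, ?_⟩
          · rw [lastV_concat]; exact hx
          · intro y hy; exact hl₂ y hy
        · refine ⟨[], s₀.1, s₀.2, l₀, rfl, by simpa using hu1, ?_⟩
          intro y hy hc
          exact hex ⟨y, hy, hc⟩
      rw [hldec] at hsp hch hband hdl hend hlen ⊢
      have hchQ : EdgeChain (R.EdgeN (2*N^2+n)) u Q := (edgeChain_append.1 hch).1
      have hrest := (edgeChain_append.1 hch).2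
      have hcrossE : R.EdgeN (2*N^2+n) (lastV u Q) w₁ c₁ := hrest.1
      have hch₂ : EdgeChain (R.EdgeN (2*N^2+n)) w₁ l₂' := hrest.2
      have hw₁mem : w₁ ∈ (Q ++ (c₁, w₁) :: l₂').map Prod.snd := by simp
      have hw₁low : ((N^2:ℕ):ℤ) + p ≤ w₁.1 := (hband _ hw₁mem).1
      have hw₁ne : w₁.1 ≠ ((N^2:ℕ):ℤ) + p := hnotbase (c₁, w₁) (List.mem_cons_self)
      have hw₁up : w₁.1 ≤ (lastV u Q).1 + 1 := (edgeN_bounds hcrossE).2.2.2.2.1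
      have hw₁ : w₁.1 = ((N^2:ℕ):ℤ) + p + 1 := by rw [hQlast] at hw₁up; omega
      -- positions of the chunk
      have hQmem : ∀ x ∈ u :: Q.map Prod.snd, x ∈ u :: (Q ++ (c₁,w₁) :: l₂').map Prod.snd := by
        intro x hx
        rcases List.mem_cons.1 hx with rfl | hx
        · simp
        · simp only [List.map_append, List.mem_cons, List.mem_append]
          exact Or.inr (Or.inl hx)
      have hQlow : ∀ x ∈ u :: Q.map Prod.snd, u.1 ≤ x.1 := by
        intro x hx
        rcases List.mem_cons.1 hx with rfl | hx
        · exact le_refl _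
        · rw [hu1]
          exact (hband x (by
            simp only [List.map_append, List.mem_cons, List.mem_append]
            exact Or.inl hx)).1
      have hQpos : ∀ x ∈ u :: Q.map Prod.snd,
          ((N^2:ℕ):ℤ) + p ≤ x.1 ∧ x.1 ≤ ((N^2:ℕ):ℤ) + p + ((N^2:ℕ):ℤ) := by
        rcases eq_or_ne Q [] with rfl | hQne
        · intro x hx
          rcases List.mem_cons.1 hx with rfl | hx
          · omega
          · simp at hx
        · have hcb := cornerBoundR (post := (c₁, w₁) :: (l₂' ++ post)) hnorm
            (by rw [hsp]; simp) hpre hQne hchQ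
            (by rw [hQlast, hu1]) hQlow (by
              intro x hx
              rcases List.mem_cons.1 hx with rfl | hx
              · rw [hu1, ← hBpow]; omega
              · have := hband x (by
                  simp only [List.map_append, List.mem_cons, List.mem_append]
                  exact Or.inl hx)
                rw [← hBpow]; omega)
          intro x hx
          refine ⟨by rw [← hu1]; exact hQlow x hx, ?_⟩
          have := hcb x hx
          rw [hu1, hBpow] at *
          omega
      -- the Rs-implied forward constraint
      have hcon : ∀ μ₀ μ₀', Rs R μ₀ μ₀' → μ₀ u.2 - μ₀' w₁.2 ≤ wsum Q + c₁ := by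
        intro μ₀ μ₀' hRs
        obtain ⟨hrel, hSfw, hSbw⟩ := hRs
        obtain ⟨ν₁, hν₁⟩ := hSfw
        obtain ⟨g, hg0, -, hgs⟩ := relPow_chain (N^2) μ₀ ν₁ hν₁
        exact foldFw hbal hK g hg0 hgs hrel hu1 hchQ
          (by intro x hx; have := hQpos x hx; omega) (by rw [hQlast, ← hu1])
          hcrossE (by omega)
      have hstep : f p u.2 - f (p+1) w₁.2 ≤ wsum Q + c₁ :=
        hfs p hpn u.2 w₁.2 (wsum Q + c₁) hcon
      -- recurse on the remainder
      have hlen' : l₂'.length ≤ L := by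
        have := hlen
        simp only [List.length_cons, List.length_append] at this ⊢
        omega
      have hpre' : lastV ρ.first (pre ++ (Q ++ [(c₁, w₁)])) = w₁ := by
        rw [lastV_append, hpre, lastV_append]; rfl
      have hrec := ih l₂' hlen' (p+1) (pre ++ (Q ++ [(c₁, w₁)])) post w₁
        (by rw [hsp]; simp) hpre' hpn (by rw [hw₁]; push_cast; ring) hch₂
        (by
          intro x hx
          obtain ⟨y, hy, rfl⟩ := List.mem_map.1 hx
          have h1 := hband y.2 (mem_map_snd_right Q (c₁, w₁) hy)
          have h2 := hnotbase y (List.mem_cons_of_mem _ hy)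
          push_cast
          omega)
        (by
          intro x hx
          apply hdl
          have : (Q ++ (c₁, w₁) :: l₂').map Prod.snd
              = (Q.map Prod.snd ++ [w₁]) ++ l₂'.map Prod.snd := by simp
          rw [this]
          exact mem_dropLast_append hx)
        (by rw [← hend, lastV_append, lastV_cons])
        (by
          intro hpn1
          cases l₂' with
          | nil => rfl
          | cons a t =>
            exfalso
            have hmem : w₁ ∈ ((Q ++ (c₁, w₁) :: a :: t).map Prod.snd).dropLast := by
              have : (Q ++ (c₁, w₁) :: a :: t).map Prod.snd
                  = Q.map Prod.snd ++ (w₁ :: a.2 :: t.map Prod.snd) := by simp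
              rw [this]
              exact mem_dropLast_append (head_mem_dropLast_cons (by simp))
            have := hdl w₁ hmem
            rw [hw₁] at this
            omega)
      have hendeq : lastV u (Q ++ (c₁, w₁) :: l₂') = lastV w₁ l₂' := by
        rw [lastV_append, lastV_cons]
      rw [hendeq]
      rw [hendeq] at hend
      have hws : wsum (Q ++ (c₁, w₁) :: l₂') = wsum Q + c₁ + wsum l₂' := by
        simp [wsum]; ring
      rw [hws]
      linarith

lemma bwPass {R : DBC N} (hbal : R.Balanced) (hN : 1 ≤ N) {n : ℕ} (hn : 1 ≤ n)
    {ρ : UPath N} (hnorm : ρ.IsNormalized (2 * N ^ 2 + n))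
    (g : ℕ → Val N) (hgs : ∀ t, t < n → Rbw R (g t) (g (t+1))) :
    ∀ (L : ℕ) (l : List (ℤ × Vtx N)), l.length ≤ L →
      ∀ (p : ℕ) (pre post : List (ℤ × Vtx N)) (u : Vtx N),
      ρ.steps = pre ++ (l ++ post) →
      lastV ρ.first pre = u →
      p ≤ n → u.1 = ((N^2 : ℕ) : ℤ) + p →
      EdgeChain (R.EdgeN (2 * N ^ 2 + n)) u l →
      (∀ x ∈ l.map Prod.snd, ((N^2:ℕ):ℤ) ≤ x.1 ∧ x.1 ≤ ((N^2:ℕ):ℤ) + p) →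
      (∀ x ∈ (l.map Prod.snd).dropLast, x.1 ≠ ((N^2:ℕ):ℤ)) →
      (lastV u l).1 = ((N^2:ℕ):ℤ) →
      (p = 0 → l = []) →
      g p u.2 - g 0 (lastV u l).2 ≤ wsum l := by
  have hK : 1 ≤ N^2 := Nat.one_le_pow _ _ hN
  have hBpow : ((N^2:ℕ):ℤ) = (N:ℤ)^2 := by push_cast; ring
  intro L
  induction L with
  | zero =>
    intro l hlen p pre post u hsp hpre hp hu1 hch hband hdl hend hemp
    have hl : l = [] := List.length_eq_zero_iff.1 (Nat.le_zero.1 hlen)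
    subst hl
    simp only [lastV_nil] at hend ⊢
    have hpn : p = 0 := by rw [hu1] at hend; omega
    subst hpn
    simp
  | succ L ih =>
    intro l hlen p pre post u hsp hpre hp hu1 hch hband hdl hend hemp
    cases l with
    | nil =>
      simp only [lastV_nil] at hend ⊢
      have hpn : p = 0 := by rw [hu1] at hend; omega
      subst hpn
      simp
    | cons s₀ l₀ =>
      have hpn : 0 < p := by
        rcases Nat.eq_zero_or_pos p with h | h
        · exact absurd (hemp h) (by simp)
        · exact h
      obtain ⟨Q, c₁, w₁, l₂', hldec, hQlast, hnotbase⟩ :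
          ∃ (Q : List (ℤ × Vtx N)) (c₁ : ℤ) (w₁ : Vtx N) (l₂' : List (ℤ × Vtx N)),
            s₀ :: l₀ = Q ++ (c₁, w₁) :: l₂' ∧ (lastV u Q).1 = ((N^2:ℕ):ℤ) + p ∧
            ∀ y ∈ (c₁, w₁) :: l₂', y.2.1 ≠ ((N^2:ℕ):ℤ) + p := by
        by_cases hex : ∃ x ∈ s₀ :: l₀, x.2.1 = ((N^2:ℕ):ℤ) + p
        · obtain ⟨l₁, x, l₂, hdec, hx, hl₂⟩ := split_last hex
          have hl₂ne : l₂ ≠ [] := by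
            rintro rfl
            rw [hdec] at hend
            rw [lastV_append] at hend
            simp only [lastV_cons, lastV_nil] at hend
            rw [hx] at hend
            omega
          obtain ⟨s₁, l₂', rfl⟩ : ∃ s₁ l₂', l₂ = s₁ :: l₂' := by
            cases l₂ with
            | nil => exact absurd rfl hl₂ne
            | cons a t => exact ⟨a, t, rfl⟩
          refine ⟨l₁ ++ [x], s₁.1, s₁.2, l₂', by rw [hdec]; simp, ?_, ?_⟩
          · rw [lastV_concat]; exact hx
          · intro y hy; exact hl₂ y hy
        · refine ⟨[], s₀.1, s₀.2, l₀, rfl, by simpa using hu1, ?_⟩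
          intro y hy hc
          exact hex ⟨y, hy, hc⟩
      rw [hldec] at hsp hch hband hdl hend hlen ⊢
      have hchQ : EdgeChain (R.EdgeN (2*N^2+n)) u Q := (edgeChain_append.1 hch).1
      have hrest := (edgeChain_append.1 hch).2
      have hcrossE : R.EdgeN (2*N^2+n) (lastV u Q) w₁ c₁ := hrest.1
      have hch₂ : EdgeChain (R.EdgeN (2*N^2+n)) w₁ l₂' := hrest.2
      have hw₁mem : w₁ ∈ (Q ++ (c₁, w₁) :: l₂').map Prod.snd := by simp
      have hw₁hi : w₁.1 ≤ ((N^2:ℕ):ℤ) + p := (hband _ hw₁mem).2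
      have hw₁ne : w₁.1 ≠ ((N^2:ℕ):ℤ) + p := hnotbase (c₁, w₁) (List.mem_cons_self)
      have hw₁up : (lastV u Q).1 ≤ w₁.1 + 1 := (edgeN_bounds hcrossE).2.2.2.2.2
      have hw₁ : w₁.1 = ((N^2:ℕ):ℤ) + p - 1 := by rw [hQlast] at hw₁up; omega
      have hQhigh : ∀ x ∈ u :: Q.map Prod.snd, x.1 ≤ u.1 := by
        intro x hx
        rcases List.mem_cons.1 hx with rfl | hx
        · exact le_refl _
        · rw [hu1]
          exact (hband x (by
            simp only [List.map_append, List.mem_cons, List.mem_append]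
            exact Or.inl hx)).2
      have hQpos : ∀ x ∈ u :: Q.map Prod.snd,
          ((N^2:ℕ):ℤ) + p - ((N^2:ℕ):ℤ) ≤ x.1 ∧ x.1 ≤ ((N^2:ℕ):ℤ) + p := by
        rcases eq_or_ne Q [] with rfl | hQne
        · intro x hx
          rcases List.mem_cons.1 hx with rfl | hx
          · omega
          · simp at hx
        · have hcb := cornerBoundL (post := (c₁, w₁) :: (l₂' ++ post)) hnorm
            (by rw [hsp]; simp) hpre hQne hchQ
            (by rw [hQlast, hu1]) hQhigh (by
              intro x hx
              rcases List.mem_cons.1 hx with rfl | hx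
              · rw [hu1, ← hBpow]; omega
              · have := hband x (by
                  simp only [List.map_append, List.mem_cons, List.mem_append]
                  exact Or.inl hx)
                rw [← hBpow]; omega)
          intro x hx
          refine ⟨?_, by rw [← hu1]; exact hQhigh x hx⟩
          have := hcb x hx
          rw [hu1, hBpow] at *
          omega
      have hcon : ∀ μ₀ μ₀', Rs R μ₀ μ₀' → μ₀' u.2 - μ₀ w₁.2 ≤ wsum Q + c₁ := by
        intro μ₀ μ₀' hRs
        obtain ⟨hrel, hSfw, hSbw⟩ := hRs
        obtain ⟨ν₁, hν₁⟩ := hSbw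
        obtain ⟨gc, hg0, hgK, hgs'⟩ := relPow_chain (N^2) ν₁ μ₀' hν₁
        exact foldBw hbal hK gc hgK hgs' hrel hu1 hchQ
          (by intro x hx; have := hQpos x hx; omega) (by rw [hQlast, ← hu1])
          hcrossE (by omega)
      have hstep : g p u.2 - g (p-1) w₁.2 ≤ wsum Q + c₁ := by
        have := hgs (p-1) (by omega) u.2 w₁.2 (wsum Q + c₁) hcon
        have hp1 : p - 1 + 1 = p := Nat.succ_pred_eq_of_pos hpn
        rwa [hp1] at this
      have hlen' : l₂'.length ≤ L := by
        have := hlen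
        simp only [List.length_cons, List.length_append] at this ⊢
        omega
      have hpre' : lastV ρ.first (pre ++ (Q ++ [(c₁, w₁)])) = w₁ := by
        rw [lastV_append, hpre, lastV_append]; rfl
      have hrec := ih l₂' hlen' (p-1) (pre ++ (Q ++ [(c₁, w₁)])) post w₁
        (by rw [hsp]; simp) hpre' (by omega)
        (by rw [hw₁]; push_cast [Nat.cast_sub (by omega : 1 ≤ p)]; ring) hch₂
        (by
          intro x hx
          obtain ⟨y, hy, rfl⟩ := List.mem_map.1 hx
          have h1 := hband y.2 (mem_map_snd_right Q (c₁, w₁) hy)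
          have h2 := hnotbase y (List.mem_cons_of_mem _ hy)
          push_cast [Nat.cast_sub (by omega : 1 ≤ p)]
          omega)
        (by
          intro x hx
          apply hdl
          have : (Q ++ (c₁, w₁) :: l₂').map Prod.snd
              = (Q.map Prod.snd ++ [w₁]) ++ l₂'.map Prod.snd := by simp
          rw [this]
          exact mem_dropLast_append hx)
        (by rw [← hend, lastV_append, lastV_cons])
        (by
          intro hpn1
          cases l₂' with
          | nil => rfl
          | cons a t =>
            exfalso
            have hmem : w₁ ∈ ((Q ++ (c₁, w₁) :: a :: t).map Prod.snd).dropLast := by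
              have : (Q ++ (c₁, w₁) :: a :: t).map Prod.snd
                  = Q.map Prod.snd ++ (w₁ :: a.2 :: t.map Prod.snd) := by simp
              rw [this]
              exact mem_dropLast_append (head_mem_dropLast_cons (by simp))
            have := hdl w₁ hmem
            rw [hw₁] at this
            omega)
      have hendeq : lastV u (Q ++ (c₁, w₁) :: l₂') = lastV w₁ l₂' := by
        rw [lastV_append, lastV_cons]
      rw [hendeq]
      rw [hendeq] at hend
      have hws : wsum (Q ++ (c₁, w₁) :: l₂') = wsum Q + c₁ + wsum l₂' := by
        simp [wsum]; ring
      rw [hws]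
      linarith

end St18
namespace St18

open UPath

variable {N : ℕ}

lemma bottomExc {R : DBC N} (hbal : R.Balanced) (hN : 1 ≤ N) {n : ℕ}
    {ρ : UPath N} (hnorm : ρ.IsNormalized (2 * N ^ 2 + n))
    {μ : Val N} (hμ : Sfw R μ)
    {l pre post : List (ℤ × Vtx N)} {u : Vtx N}
    (hsp : ρ.steps = pre ++ (l ++ post)) (hpre : lastV ρ.first pre = u)
    (hch : EdgeChain (R.EdgeN (2*N^2+n)) u l)
    (hu1 : u.1 = ((N^2:ℕ):ℤ))
    (hband : ∀ x ∈ l.map Prod.snd, ((N^2:ℕ):ℤ) ≤ x.1 ∧ x.1 ≤ ((N^2:ℕ):ℤ) + n)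
    (hend : (lastV u l).1 = ((N^2:ℕ):ℤ)) :
    μ u.2 - μ (lastV u l).2 ≤ wsum l := by
  have hK : 1 ≤ N^2 := Nat.one_le_pow _ _ hN
  have hBpow : ((N^2:ℕ):ℤ) = (N:ℤ)^2 := by push_cast; ring
  rcases eq_or_ne l [] with rfl | hlne
  · simp
  · have hlow : ∀ x ∈ u :: l.map Prod.snd, u.1 ≤ x.1 := by
      intro x hx
      rcases List.mem_cons.1 hx with rfl | hx
      · exact le_refl _
      · rw [hu1]; exact (hband x hx).1
    have hcb := cornerBoundR hnorm hsp hpre hlne hch (by rw [hend, hu1]) hlow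
      (by
        intro x hx
        rcases List.mem_cons.1 hx with rfl | hx
        · rw [hu1, ← hBpow]; omega
        · have := hband x hx; rw [← hBpow]; omega)
    have hcb' : ∀ x ∈ u :: l.map Prod.snd, x.1 ≤ u.1 + ((N^2:ℕ):ℤ) := by
      intro x hx
      have := hcb x hx
      rw [hBpow]; exact this
    obtain ⟨ν₁, hν₁⟩ := hμ
    obtain ⟨g, hg0, -, hgs⟩ := relPow_chain (N^2) μ ν₁ hν₁
    have hW : ∀ a : ℤ, ((N^2:ℕ):ℤ) ≤ a → a < ((N^2:ℕ):ℤ) + ((N^2:ℕ):ℤ) →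
        R.rel ((fun a : ℤ => g (a - ((N^2:ℕ):ℤ)).toNat) a)
          ((fun a : ℤ => g (a - ((N^2:ℕ):ℤ)).toNat) (a+1)) := by
      intro a h1 h2
      have e : (a + 1 - ((N^2:ℕ):ℤ)).toNat = (a - ((N^2:ℕ):ℤ)).toNat + 1 := by omega
      simp only [e]
      exact hgs _ (by omega)
    have hwalk := chainWalk hbal (fun a => g (a - ((N^2:ℕ):ℤ)).toNat)
      ((N^2:ℕ):ℤ) (((N^2:ℕ):ℤ) + ((N^2:ℕ):ℤ)) (by omega) hW
      (fun u v c h => edgeN_edgeAt h) l u hch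
      (by
        intro x hx
        have h1 := hlow x hx
        have h2 := hcb' x hx
        omega)
    simpa [hu1, hend, hg0] using hwalk

lemma topExc {R : DBC N} (hbal : R.Balanced) (hN : 1 ≤ N) {n : ℕ}
    {ρ : UPath N} (hnorm : ρ.IsNormalized (2 * N ^ 2 + n))
    {κ : Val N} (hκ : Sbw R κ)
    {l pre post : List (ℤ × Vtx N)} {u : Vtx N}
    (hsp : ρ.steps = pre ++ (l ++ post)) (hpre : lastV ρ.first pre = u)
    (hch : EdgeChain (R.EdgeN (2*N^2+n)) u l)
    (hu1 : u.1 = ((N^2:ℕ):ℤ) + n)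
    (hband : ∀ x ∈ l.map Prod.snd, ((N^2:ℕ):ℤ) ≤ x.1 ∧ x.1 ≤ ((N^2:ℕ):ℤ) + n)
    (hend : (lastV u l).1 = ((N^2:ℕ):ℤ) + n) :
    κ u.2 - κ (lastV u l).2 ≤ wsum l := by
  have hK : 1 ≤ N^2 := Nat.one_le_pow _ _ hN
  have hBpow : ((N^2:ℕ):ℤ) = (N:ℤ)^2 := by push_cast; ring
  rcases eq_or_ne l [] with rfl | hlne
  · simp
  · have hhigh : ∀ x ∈ u :: l.map Prod.snd, x.1 ≤ u.1 := by
      intro x hx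
      rcases List.mem_cons.1 hx with rfl | hx
      · exact le_refl _
      · rw [hu1]; exact (hband x hx).2
    have hcb := cornerBoundL hnorm hsp hpre hlne hch (by rw [hend, hu1]) hhigh
      (by
        intro x hx
        rcases List.mem_cons.1 hx with rfl | hx
        · rw [hu1, ← hBpow]; omega
        · have := hband x hx; rw [← hBpow]; omega)
    have hcb' : ∀ x ∈ u :: l.map Prod.snd, u.1 - ((N^2:ℕ):ℤ) ≤ x.1 := by
      intro x hx
      have := hcb x hx
      rw [hBpow]; exact this
    obtain ⟨ν₁, hν₁⟩ := hκ
    obtain ⟨g, -, hgK, hgs⟩ := relPow_chain (N^2) ν₁ κ hν₁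
    have hW : ∀ a : ℤ, ((N^2:ℕ):ℤ) + n - ((N^2:ℕ):ℤ) ≤ a → a < ((N^2:ℕ):ℤ) + n →
        R.rel ((fun a : ℤ => g (a - ((N^2:ℕ):ℤ) - n + ((N^2:ℕ):ℤ)).toNat) a)
          ((fun a : ℤ => g (a - ((N^2:ℕ):ℤ) - n + ((N^2:ℕ):ℤ)).toNat) (a+1)) := by
      intro a h1 h2
      have e : (a + 1 - ((N^2:ℕ):ℤ) - n + ((N^2:ℕ):ℤ)).toNat
          = (a - ((N^2:ℕ):ℤ) - n + ((N^2:ℕ):ℤ)).toNat + 1 := by omega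
      simp only [e]
      exact hgs _ (by omega)
    have hwalk := chainWalk hbal (fun a => g (a - ((N^2:ℕ):ℤ) - n + ((N^2:ℕ):ℤ)).toNat)
      (((N^2:ℕ):ℤ) + n - ((N^2:ℕ):ℤ)) (((N^2:ℕ):ℤ) + n) (by omega) hW
      (fun u v c h => edgeN_edgeAt h) l u hch
      (by
        intro x hx
        have h1 := hhigh x hx
        have h2 := hcb' x hx
        omega)
    have e0 : (((N^2:ℕ):ℤ) + n - ((N^2:ℕ):ℤ) - n + ((N^2:ℕ):ℤ)).toNat = N^2 := by omega
    have e1 : ((N:ℤ) ^ 2).toNat = N ^ 2 := by rw [← hBpow]; omega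
    simpa [hu1, hend, e0, e1, hgK] using hwalk

/-- The global value function: honest valuations on the two padding regions. -/
def Vv (vch kch : ℕ → Val N) (n : ℕ) (x : Vtx N) : ℤ :=
  if x.1 ≤ ((N^2:ℕ):ℤ) then vch x.1.toNat x.2
  else kch (x.1 - ((N^2:ℕ):ℤ) - n).toNat x.2

end St18
namespace St18

open UPath

variable {N : ℕ}

lemma walkMain {R : DBC N} (hbal : R.Balanced) (hN : 1 ≤ N) {n : ℕ} (hn : 1 ≤ n)
    {ρ : UPath N} (hnorm : ρ.IsNormalized (2 * N ^ 2 + n))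
    (vch kch f g : ℕ → Val N)
    (hvch : ∀ t, t < N^2 → R.rel (vch t) (vch (t+1)))
    (hkch : ∀ t, t < N^2 → R.rel (kch t) (kch (t+1)))
    (hfs : ∀ t, t < n → Rfw R (f t) (f (t+1)))
    (hgs : ∀ t, t < n → Rbw R (g t) (g (t+1)))
    (hμf : vch (N^2) = f 0) (hμg : vch (N^2) = g 0)
    (hκf : kch 0 = f n) (hκg : kch 0 = g n)
    (hSfwμ : Sfw R (vch (N^2))) (hSbwκ : Sbw R (kch 0)) :
    ∀ (L : ℕ) (l pre : List (ℤ × Vtx N)), l.length ≤ L →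
      ρ.steps = pre ++ l →
      ∀ u, lastV ρ.first pre = u →
      EdgeChain (R.EdgeN (2*N^2+n)) u l →
      (u.1 ≤ ((N^2:ℕ):ℤ) ∨ ((N^2:ℕ):ℤ) + n ≤ u.1) →
      ((lastV u l).1 = 0 ∨ (lastV u l).1 = ((2*N^2+n : ℕ):ℤ)) →
      Vv vch kch n u - Vv vch kch n (lastV u l) ≤ wsum l := by
  have hK : 1 ≤ N^2 := Nat.one_le_pow _ _ hN
  have hm : ((2*N^2+n:ℕ):ℤ) = ((N^2:ℕ):ℤ) + ((N^2:ℕ):ℤ) + n := by push_cast; ring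
  have e2 : ((N^2:ℕ):ℤ).toNat = N^2 := by omega
  have hVlow : ∀ x : Vtx N, x.1 ≤ ((N^2:ℕ):ℤ) → Vv vch kch n x = vch x.1.toNat x.2 := by
    intro x hx
    simp only [Vv, if_pos hx]
  have hVhigh : ∀ x : Vtx N, ((N^2:ℕ):ℤ) + n ≤ x.1 →
      Vv vch kch n x = kch (x.1 - ((N^2:ℕ):ℤ) - n).toNat x.2 := by
    intro x hx
    have hnx : ¬ x.1 ≤ ((N^2:ℕ):ℤ) := by omega
    simp only [Vv, if_neg hnx]
  have hWlow : ∀ a : ℤ, (0:ℤ) ≤ a → a < ((N^2:ℕ):ℤ) →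
      R.rel ((fun a : ℤ => vch a.toNat) a) ((fun a : ℤ => vch a.toNat) (a+1)) := by
    intro a h1 h2
    have e : (a+1).toNat = a.toNat + 1 := by omega
    simp only [e]
    exact hvch _ (by omega)
  have hWhigh : ∀ a : ℤ, ((N^2:ℕ):ℤ) + n ≤ a → a < ((2*N^2+n:ℕ):ℤ) →
      R.rel ((fun a : ℤ => kch (a - ((N^2:ℕ):ℤ) - n).toNat) a)
        ((fun a : ℤ => kch (a - ((N^2:ℕ):ℤ) - n).toNat) (a+1)) := by
    intro a h1 h2
    have e : (a + 1 - ((N^2:ℕ):ℤ) - n).toNat = (a - ((N^2:ℕ):ℤ) - n).toNat + 1 := by omega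
    simp only [e]
    exact hkch _ (by omega)
  intro L
  induction L with
  | zero =>
    intro l pre hlen hsp u hpre hch hout hqend
    have hl : l = [] := List.length_eq_zero_iff.1 (Nat.le_zero.1 hlen)
    subst hl
    simp
  | succ L ih =>
    intro l pre hlen hsp u hpre hch hout hqend
    cases l with
    | nil => simp
    | cons s₁ l' =>
      have hE1 : R.EdgeN (2*N^2+n) u s₁.2 s₁.1 := hch.1
      have hb := edgeN_bounds hE1
      rcases hout with hlow | hhigh
      · by_cases hw : s₁.2.1 ≤ ((N^2:ℕ):ℤ)
        · -- pointwise step in the lower padding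
          obtain ⟨pc, hat⟩ := edgeN_edgeAt hE1
          have hstep : Vv vch kch n u - Vv vch kch n s₁.2 ≤ s₁.1 := by
            rw [hVlow u hlow, hVlow s₁.2 hw]
            exact chainEval hbal (fun a => vch a.toNat) 0 ((N^2:ℕ):ℤ) (by omega)
              hWlow hat hb.1 hlow hb.2.2.1 hw
          have hrec := ih l' (pre ++ [s₁]) (by simpa using Nat.lt_succ_iff.1 hlen)
            (by rw [hsp]; simp) s₁.2 (by rw [lastV_append, hpre]; rfl) hch.2
            (Or.inl hw) (by simpa using hqend)
          rw [lastV_cons, wsum_cons]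
          rw [lastV_cons] at hqend
          linarith
        · -- stretch entering the band from below
          have hu1 : u.1 = ((N^2:ℕ):ℤ) := by omega
          have hex : ∃ x ∈ s₁ :: l', x.2.1 ≤ ((N^2:ℕ):ℤ) ∨ ((N^2:ℕ):ℤ) + n ≤ x.2.1 := by
            obtain ⟨y, hy, hy2⟩ := List.mem_map.1 (lastV_mem (l := s₁ :: l') (by simp) u)
            refine ⟨y, hy, ?_⟩
            rw [hy2]
            rcases hqend with h | h
            · left; omega
            · right; omega
          obtain ⟨l₁, sᵣ, l₂, hdec, hPr, hl₁⟩ := split_first hex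
          have hint : ∀ y ∈ l₁, ((N^2:ℕ):ℤ) < y.2.1 ∧ y.2.1 < ((N^2:ℕ):ℤ) + n := by
            intro y hy
            have h1 := hl₁ y hy
            push_neg at h1
            omega
          rw [hdec] at hch hsp hqend hlen ⊢
          have hch1 : EdgeChain (R.EdgeN (2*N^2+n)) u l₁ := (edgeChain_append.1 hch).1
          have hrest := (edgeChain_append.1 hch).2
          have hcrossE : R.EdgeN (2*N^2+n) (lastV u l₁) sᵣ.2 sᵣ.1 := hrest.1
          have hch2 : EdgeChain (R.EdgeN (2*N^2+n)) sᵣ.2 l₂ := hrest.2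
          have hwr : sᵣ.2.1 = ((N^2:ℕ):ℤ) ∨ sᵣ.2.1 = ((N^2:ℕ):ℤ) + n := by
            have hbr := edgeN_bounds hcrossE
            cases l₁ with
            | nil =>
              simp only [List.nil_append, List.cons.injEq] at hdec
              obtain ⟨h1, h2⟩ := hdec
              subst h1
              simp only [lastV_nil] at hbr
              omega
            | cons a t =>
              obtain ⟨y, hy, hy2⟩ := List.mem_map.1 (lastV_mem (l := a :: t) (by simp) u)
              have hi := hint y hy
              rw [hy2] at hi
              omega
          have hstband : ∀ x ∈ (l₁ ++ [sᵣ]).map Prod.snd,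
              ((N^2:ℕ):ℤ) ≤ x.1 ∧ x.1 ≤ ((N^2:ℕ):ℤ) + n := by
            intro x hx
            simp only [List.map_append, List.map_cons, List.map_nil, List.mem_append,
              List.mem_cons, List.not_mem_nil, or_false] at hx
            rcases hx with hx | hx
            · obtain ⟨y, hy, rfl⟩ := List.mem_map.1 hx
              have := hint y hy
              omega
            · subst hx
              omega
          have hstlast : lastV u (l₁ ++ [sᵣ]) = sᵣ.2 := lastV_concat _ _ _
          have hchst : EdgeChain (R.EdgeN (2*N^2+n)) u (l₁ ++ [sᵣ]) :=
            edgeChain_append.2 ⟨hch1, hcrossE, trivial⟩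
          have hsp' : ρ.steps = (pre ++ (l₁ ++ [sᵣ])) ++ l₂ := by rw [hsp]; simp
          have hpre' : lastV ρ.first (pre ++ (l₁ ++ [sᵣ])) = sᵣ.2 := by
            rw [lastV_append, hpre, hstlast]
          have hlasteq : lastV u (l₁ ++ sᵣ :: l₂) = lastV sᵣ.2 l₂ := by
            rw [lastV_append, lastV_cons]
          have hlen' : l₂.length ≤ L := by
            have := hlen
            simp only [List.length_append, List.length_cons] at this
            omega
          have hVu : Vv vch kch n u = vch (N^2) u.2 := by
            rw [hVlow u hlow, hu1, e2]
          have hws : wsum (l₁ ++ sᵣ :: l₂) = wsum (l₁ ++ [sᵣ]) + wsum l₂ := by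
            simp [wsum]; ring
          rw [hlasteq] at hqend ⊢
          rw [hws]
          rcases hwr with hwr | hwr
          · -- bottom excursion, returns to the lower boundary
            have hexc := bottomExc (post := l₂) hbal hN hnorm hSfwμ (by rw [hsp]; simp) hpre hchst hu1
              hstband (by rw [hstlast, hwr])
            rw [hstlast] at hexc
            have hVr : Vv vch kch n sᵣ.2 = vch (N^2) sᵣ.2.2 := by
              rw [hVlow _ (le_of_eq hwr), hwr, e2]
            have hrec := ih l₂ (pre ++ (l₁ ++ [sᵣ])) hlen' hsp' sᵣ.2 hpre' hch2
              (Or.inl (le_of_eq hwr)) hqend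
            rw [hVu, hVr] at *
            linarith
          · -- forward pass through the band
            have hpass := fwPass hbal hN hn hnorm f hfs (l₁ ++ [sᵣ]).length (l₁ ++ [sᵣ])
              le_rfl 0 pre l₂ u (by rw [hsp]; simp) hpre (by omega)
              (by rw [hu1]; simp) hchst
              (by intro x hx; simpa using hstband x hx)
              (by
                intro x hx
                rw [List.map_append, List.map_cons, List.map_nil, List.dropLast_concat] at hx
                obtain ⟨y, hy, rfl⟩ := List.mem_map.1 hx
                have := hint y hy
                omega)
              (by rw [hstlast, hwr])
              (fun h => absurd h (by omega))
            rw [hstlast] at hpass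
            have hVr : Vv vch kch n sᵣ.2 = f n sᵣ.2.2 := by
              rw [hVhigh _ (le_of_eq hwr.symm), hwr]
              have e3 : (((N^2:ℕ):ℤ) + n - ((N^2:ℕ):ℤ) - n).toNat = 0 := by omega
              rw [e3, hκf]
            have hrec := ih l₂ (pre ++ (l₁ ++ [sᵣ])) hlen' hsp' sᵣ.2 hpre' hch2
              (Or.inr (le_of_eq hwr.symm)) hqend
            rw [hVu, hμf, hVr] at *
            linarith
      · by_cases hw : ((N^2:ℕ):ℤ) + n ≤ s₁.2.1
        · -- pointwise step in the upper padding
          obtain ⟨pc, hat⟩ := edgeN_edgeAt hE1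
          have hstep : Vv vch kch n u - Vv vch kch n s₁.2 ≤ s₁.1 := by
            rw [hVhigh u hhigh, hVhigh s₁.2 hw]
            exact chainEval hbal (fun a => kch (a - ((N^2:ℕ):ℤ) - n).toNat)
              (((N^2:ℕ):ℤ) + n) ((2*N^2+n:ℕ):ℤ) (by omega)
              hWhigh hat hhigh hb.2.1 hw hb.2.2.2.1
          have hrec := ih l' (pre ++ [s₁]) (by simpa using Nat.lt_succ_iff.1 hlen)
            (by rw [hsp]; simp) s₁.2 (by rw [lastV_append, hpre]; rfl) hch.2
            (Or.inr hw) (by simpa using hqend)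
          rw [lastV_cons, wsum_cons]
          rw [lastV_cons] at hqend
          linarith
        · -- stretch entering the band from above
          have hu1 : u.1 = ((N^2:ℕ):ℤ) + n := by omega
          have hex : ∃ x ∈ s₁ :: l', x.2.1 ≤ ((N^2:ℕ):ℤ) ∨ ((N^2:ℕ):ℤ) + n ≤ x.2.1 := by
            obtain ⟨y, hy, hy2⟩ := List.mem_map.1 (lastV_mem (l := s₁ :: l') (by simp) u)
            refine ⟨y, hy, ?_⟩
            rw [hy2]
            rcases hqend with h | h
            · left; omega
            · right; omega
          obtain ⟨l₁, sᵣ, l₂, hdec, hPr, hl₁⟩ := split_first hex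
          have hint : ∀ y ∈ l₁, ((N^2:ℕ):ℤ) < y.2.1 ∧ y.2.1 < ((N^2:ℕ):ℤ) + n := by
            intro y hy
            have h1 := hl₁ y hy
            push_neg at h1
            omega
          rw [hdec] at hch hsp hqend hlen ⊢
          have hch1 : EdgeChain (R.EdgeN (2*N^2+n)) u l₁ := (edgeChain_append.1 hch).1
          have hrest := (edgeChain_append.1 hch).2
          have hcrossE : R.EdgeN (2*N^2+n) (lastV u l₁) sᵣ.2 sᵣ.1 := hrest.1
          have hch2 : EdgeChain (R.EdgeN (2*N^2+n)) sᵣ.2 l₂ := hrest.2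
          have hwr : sᵣ.2.1 = ((N^2:ℕ):ℤ) ∨ sᵣ.2.1 = ((N^2:ℕ):ℤ) + n := by
            have hbr := edgeN_bounds hcrossE
            cases l₁ with
            | nil =>
              simp only [List.nil_append, List.cons.injEq] at hdec
              obtain ⟨h1, h2⟩ := hdec
              subst h1
              simp only [lastV_nil] at hbr
              omega
            | cons a t =>
              obtain ⟨y, hy, hy2⟩ := List.mem_map.1 (lastV_mem (l := a :: t) (by simp) u)
              have hi := hint y hy
              rw [hy2] at hi
              omega
          have hstband : ∀ x ∈ (l₁ ++ [sᵣ]).map Prod.snd,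
              ((N^2:ℕ):ℤ) ≤ x.1 ∧ x.1 ≤ ((N^2:ℕ):ℤ) + n := by
            intro x hx
            simp only [List.map_append, List.map_cons, List.map_nil, List.mem_append,
              List.mem_cons, List.not_mem_nil, or_false] at hx
            rcases hx with hx | hx
            · obtain ⟨y, hy, rfl⟩ := List.mem_map.1 hx
              have := hint y hy
              omega
            · subst hx
              omega
          have hstlast : lastV u (l₁ ++ [sᵣ]) = sᵣ.2 := lastV_concat _ _ _
          have hchst : EdgeChain (R.EdgeN (2*N^2+n)) u (l₁ ++ [sᵣ]) :=
            edgeChain_append.2 ⟨hch1, hcrossE, trivial⟩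
          have hsp' : ρ.steps = (pre ++ (l₁ ++ [sᵣ])) ++ l₂ := by rw [hsp]; simp
          have hpre' : lastV ρ.first (pre ++ (l₁ ++ [sᵣ])) = sᵣ.2 := by
            rw [lastV_append, hpre, hstlast]
          have hlasteq : lastV u (l₁ ++ sᵣ :: l₂) = lastV sᵣ.2 l₂ := by
            rw [lastV_append, lastV_cons]
          have hlen' : l₂.length ≤ L := by
            have := hlen
            simp only [List.length_append, List.length_cons] at this
            omega
          have hVu : Vv vch kch n u = kch 0 u.2 := by
            rw [hVhigh u hhigh, hu1]
            have e3 : (((N^2:ℕ):ℤ) + n - ((N^2:ℕ):ℤ) - n).toNat = 0 := by omega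
            rw [e3]
          have hws : wsum (l₁ ++ sᵣ :: l₂) = wsum (l₁ ++ [sᵣ]) + wsum l₂ := by
            simp [wsum]; ring
          rw [hlasteq] at hqend ⊢
          rw [hws]
          rcases hwr with hwr | hwr
          · -- backward pass through the band
            have hpass := bwPass hbal hN hn hnorm g hgs (l₁ ++ [sᵣ]).length (l₁ ++ [sᵣ])
              le_rfl n pre l₂ u (by rw [hsp]; simp) hpre le_rfl
              (by rw [hu1]) hchst
              (by
                intro x hx
                exact hstband x hx)
              (by
                intro x hx
                rw [List.map_append, List.map_cons, List.map_nil, List.dropLast_concat] at hx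
                obtain ⟨y, hy, rfl⟩ := List.mem_map.1 hx
                have := hint y hy
                omega)
              (by rw [hstlast, hwr])
              (fun h => absurd h (by omega))
            rw [hstlast] at hpass
            have hVr : Vv vch kch n sᵣ.2 = g 0 sᵣ.2.2 := by
              rw [hVlow _ (le_of_eq hwr), hwr, e2, hμg]
            have hrec := ih l₂ (pre ++ (l₁ ++ [sᵣ])) hlen' hsp' sᵣ.2 hpre' hch2
              (Or.inl (le_of_eq hwr)) hqend
            rw [hVu, hκg, hVr] at *
            linarith
          · -- top excursion, returns to the upper boundary
            have hexc := topExc (post := l₂) hbal hN hnorm hSbwκ (by rw [hsp]; simp) hpre hchst hu1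
              hstband (by rw [hstlast, hwr])
            rw [hstlast] at hexc
            have hVr : Vv vch kch n sᵣ.2 = kch 0 sᵣ.2.2 := by
              rw [hVhigh _ (le_of_eq hwr.symm), hwr]
              have e3 : (((N^2:ℕ):ℤ) + n - ((N^2:ℕ):ℤ) - n).toNat = 0 := by omega
              rw [e3]
            have hrec := ih l₂ (pre ++ (l₁ ++ [sᵣ])) hlen' hsp' sᵣ.2 hpre' hch2
              (Or.inr (le_of_eq hwr.symm)) hqend
            rw [hVu, hVr] at *
            linarith

end St18
/-- Encoding of extremal normalized paths of `G_R^{2N²+n}`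
by the formula `ψ(n) = ∃y,z. R^{N²}(x,y) ∧ φ(n,y,z) ∧ R^{N²}(z,x')`. -/
theorem statement18 (N : ℕ) (hN : 1 ≤ N) (R : DBC N) (hbal : R.Balanced)
    (n : ℕ) (hn : 1 ≤ n) (ρ : UPath N) (i j : Fin N) (p q : ℤ)
    (hp : p = 0 ∨ p = ((2 * N ^ 2 + n : ℕ) : ℤ))
    (hq : q = 0 ∨ q = ((2 * N ^ 2 + n : ℕ) : ℤ))
    (hf : ρ.first = (p, i)) (hl : ρ.last = (q, j))
    (hρ : ρ.InUnfN R (2 * N ^ 2 + n))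
    (hnorm : ρ.IsNormalized (2 * N ^ 2 + n)) :
    ∀ ν ν' : Val N,
      (∃ μ κ : Val N, relPow R.rel (N ^ 2) ν μ ∧ relPow (Rfw R) n μ κ ∧
        relPow (Rbw R) n μ κ ∧ Sfw R μ ∧ Sbw R κ ∧ relPow R.rel (N ^ 2) κ ν') →
      (p = 0 ∧ q = ((2 * N ^ 2 + n : ℕ) : ℤ) → ν i - ν' j ≤ ρ.weight) ∧
      (p = ((2 * N ^ 2 + n : ℕ) : ℤ) ∧ q = 0 → ν' i - ν j ≤ ρ.weight) ∧
      (p = 0 ∧ q = 0 → ν i - ν j ≤ ρ.weight) ∧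
      (p = ((2 * N ^ 2 + n : ℕ) : ℤ) ∧ q = ((2 * N ^ 2 + n : ℕ) : ℤ) →
        ν' i - ν' j ≤ ρ.weight) := by
  intro ν ν' hex
  obtain ⟨μ, κ, hνμ, hfwp, hbwp, hSfw, hSbw, hκν'⟩ := hex
  obtain ⟨vch, hv0, hvK, hvs⟩ := St18.relPow_chain (N^2) ν μ hνμ
  obtain ⟨kch, hk0, hkK, hks⟩ := St18.relPow_chain (N^2) κ ν' hκν'
  obtain ⟨f, hf0, hfn, hfs⟩ := St18.relPow_chain n μ κ hfwp
  obtain ⟨g, hg0, hgn, hgs⟩ := St18.relPow_chain n μ κ hbwp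
  have hfp : ρ.first.1 = p := by rw [hf]
  have hout : ρ.first.1 ≤ ((N^2:ℕ):ℤ) ∨ ((N^2:ℕ):ℤ) + n ≤ ρ.first.1 := by
    rcases hp with h | h
    · left; omega
    · right; omega
  have hlaste : St18.lastV ρ.first ρ.steps = ρ.last := rfl
  have hlq : (St18.lastV ρ.first ρ.steps).1 = q := by rw [hlaste, hl]
  have hqendv : (St18.lastV ρ.first ρ.steps).1 = 0 ∨
      (St18.lastV ρ.first ρ.steps).1 = ((2*N^2+n:ℕ):ℤ) := by
    rcases hq with h | h
    · left; omega
    · right; omega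
  have hwalk := St18.walkMain hbal hN hn hnorm vch kch f g hvs hks hfs hgs
    (by rw [hvK, hf0]) (by rw [hvK, hg0]) (by rw [hk0, hfn]) (by rw [hk0, hgn])
    (by rw [hvK]; exact hSfw) (by rw [hk0]; exact hSbw)
    ρ.steps.length ρ.steps [] le_rfl (by simp) ρ.first rfl hρ hout hqendv
  rw [hlaste] at hwalk
  have hwelt : St18.wsum ρ.steps = ρ.weight := rfl
  rw [hwelt] at hwalk
  have hV0 : ∀ k : Fin N, St18.Vv vch kch n ((0:ℤ), k) = ν k := by
    intro k
    simp only [St18.Vv]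
    rw [if_pos (by omega : (0:ℤ) ≤ ((N^2:ℕ):ℤ))]
    simpa using congrFun hv0 k
  have hVm : ∀ k : Fin N, St18.Vv vch kch n (((2*N^2+n:ℕ):ℤ), k) = ν' k := by
    intro k
    simp only [St18.Vv]
    rw [if_neg (by omega)]
    have e4 : (((2*N^2+n:ℕ):ℤ) - ((N^2:ℕ):ℤ) - n).toNat = N^2 := by omega
    rw [e4, hkK]
  refine ⟨?_, ?_, ?_, ?_⟩
  · rintro ⟨h1, h2⟩
    rw [hf, h1, hl, h2, hV0 i, hVm j] at hwalk
    linarith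
  · rintro ⟨h1, h2⟩
    rw [hf, h1, hl, h2, hVm i, hV0 j] at hwalk
    linarith
  · rintro ⟨h1, h2⟩
    rw [hf, h1, hl, h2, hV0 i, hV0 j] at hwalk
    linarith
  · rintro ⟨h1, h2⟩
    rw [hf, h1, hl, h2, hVm i, hVm j] at hwalk
    linarith
end
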